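/- arXiv:2107.08082 — 5 statements merged into one kernel-verified Lean document; each statement's English description precedes it below -/
import Mathlib

section
/- Let P and Q be finite posets, R an indecomposable commutative unital ring and Φ : I^3(P,R) → I^3(Q,R) an isomorphism. Then for all x < y in P with l(x,y) = 1 there exist u < v in Q with l(u,v) = 1 and σ ∈ J^3_2(Q,R) such that Φ(e_{xxy} + e_{xyy}) = e_{uuv} + e_{uvv} + σ. -/
/-- 3-flags (chains x ≤ y ≤ z) in a poset `P`. -/
abbrev Flag3 (P : Type*) [PartialOrder P] : Type _ :=
  {t : P × P × P // t.1 ≤ t.2.1 ∧ t.2.1 ≤ t.2.2}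

/-- `ell x y` is the length of the interval `[x,y]`, i.e. the maximal cardinality of a
chain in `[x,y]` minus one. -/
noncomputable def ell {P : Type*} [PartialOrder P] (x y : P) : ℕ∞ :=
  (Set.Icc x y).chainHeight (· < ·) - 1

section PreDefs

variable (P R : Type*) [PartialOrder P] [LocallyFiniteOrder P] [CommRing R]

/-- The multiplication of the partial flag incidence algebra `I^3(P,R)`. -/
def mul3 : (Flag3 P → R) → (Flag3 P → R) → (Flag3 P → R) := fun f g t =>
  ∑ p ∈ ((Finset.Icc t.1.1 t.1.2.1) ×ˢ (Finset.Icc t.1.2.1 t.1.2.2)).attach,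
    f ⟨(t.1.1, p.1.1, p.1.2), by
        obtain ⟨h1, h2⟩ := Finset.mem_product.mp p.2
        rw [Finset.mem_Icc] at h1 h2
        exact ⟨h1.1, h1.2.trans h2.1⟩⟩ *
    g ⟨(p.1.1, p.1.2, t.1.2.2), by
        obtain ⟨h1, h2⟩ := Finset.mem_product.mp p.2
        rw [Finset.mem_Icc] at h1 h2
        exact ⟨h1.2.trans h2.1, h2.2⟩⟩

variable {P}

/-- The standard basis element `e_t` of `I^3(P,R)`. -/
def e3 [DecidableEq P] (t0 : Flag3 P) : Flag3 P → R := fun t => if t = t0 then 1 else 0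

variable (P)

/-- The ideal `J^3_k(P,R)` of functions vanishing on flags `(x,y,z)` with `l(x,z) < k`. -/
def J3 (k : ℕ) : Submodule R (Flag3 P → R) where
  carrier := {f | ∀ t : Flag3 P, ell t.1.1 t.1.2.2 < (k : ℕ∞) → f t = 0}
  add_mem' := by
    intro f g hf hg t ht
    simp only [Pi.add_apply, hf t ht, hg t ht, add_zero]
  zero_mem' := by intro t _; rfl
  smul_mem' := by
    intro c f hf t ht
    simp only [Pi.smul_apply, hf t ht, smul_zero]

/-- The commutator submodule `[U,V]`. -/
def commSub (U V : Submodule R (Flag3 P → R)) : Submodule R (Flag3 P → R) :=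
  Submodule.span R {h | ∃ f ∈ U, ∃ g ∈ V, h = mul3 P R f g - mul3 P R g f}

end PreDefs

section Aux
variable {X R : Type*} [PartialOrder X] [DecidableEq X] [LocallyFiniteOrder X] [CommRing R]

local instance instDLE : DecidableRel ((· ≤ ·) : X → X → Prop) := fun a b =>
  decidable_of_iff (a ∈ Finset.Icc a b) (by simp [Finset.mem_Icc])

variable (R)
def theta (x z u v : X) : Flag3 X → R := fun t =>
  if t.1.1 = x ∧ t.1.2.2 = z ∧ u ≤ t.1.2.1 ∧ t.1.2.1 ≤ v then 1 else 0
variable {R}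

lemma mul3_eval (f g : Flag3 X → R) (t : Flag3 X) :
    mul3 X R f g t = ∑ p ∈ (Finset.Icc t.1.1 t.1.2.1) ×ˢ (Finset.Icc t.1.2.1 t.1.2.2),
      (if h : (t.1.1 ≤ p.1 ∧ p.1 ≤ p.2) ∧ p.2 ≤ t.1.2.2 then
        f ⟨(t.1.1, p.1, p.2), h.1⟩ * g ⟨(p.1, p.2, t.1.2.2), h.1.2, h.2⟩ else 0) := by
  rw [mul3, ← Finset.sum_attach ((Finset.Icc t.1.1 t.1.2.1) ×ˢ (Finset.Icc t.1.2.1 t.1.2.2))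
    (fun p => (if h : (t.1.1 ≤ p.1 ∧ p.1 ≤ p.2) ∧ p.2 ≤ t.1.2.2 then
        f ⟨(t.1.1, p.1, p.2), h.1⟩ * g ⟨(p.1, p.2, t.1.2.2), h.1.2, h.2⟩ else 0))]
  refine Finset.sum_congr rfl (fun p _ => ?_)
  obtain ⟨h1, h2⟩ := Finset.mem_product.mp p.2
  rw [Finset.mem_Icc] at h1 h2
  rw [dif_pos (show ((t.1).1 ≤ (p.1).1 ∧ (p.1).1 ≤ (p.1).2) ∧ (p.1).2 ≤ (t.1).2.2 from
    ⟨⟨h1.1, h1.2.trans h2.1⟩, h2.2⟩)]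

lemma theta_mul (x₁ z₁ u₁ v₁ x₂ z₂ u₂ v₂ : X) :
    mul3 X R (theta R x₁ z₁ u₁ v₁) (theta R x₂ z₂ u₂ v₂) =
      if x₁ ≤ x₂ ∧ u₁ ≤ x₂ ∧ x₂ ≤ v₁ ∧ u₂ ≤ z₁ ∧ z₁ ≤ v₂ ∧ z₁ ≤ z₂ then
        theta R x₁ z₂ x₂ z₁ else (0 : Flag3 X → R) := by
  funext t
  obtain ⟨⟨a, b, c⟩, hab, hbc⟩ := t
  rw [mul3_eval]
  have step : ∀ p ∈ (Finset.Icc a b) ×ˢ (Finset.Icc b c),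
      (if h : (a ≤ p.1 ∧ p.1 ≤ p.2) ∧ p.2 ≤ c then
        (theta R x₁ z₁ u₁ v₁) ⟨(a, p.1, p.2), h.1⟩ *
          (theta R x₂ z₂ u₂ v₂) ⟨(p.1, p.2, c), h.1.2, h.2⟩ else 0)
      = (if p = (x₂, z₁) then
          (if a = x₁ ∧ c = z₂ ∧ u₁ ≤ x₂ ∧ x₂ ≤ v₁ ∧ u₂ ≤ z₁ ∧ z₁ ≤ v₂ then (1:R) else 0)
         else 0) := by
    rintro ⟨p1, p2⟩ hp
    rw [Finset.mem_product, Finset.mem_Icc, Finset.mem_Icc] at hp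
    rw [dif_pos (show (a ≤ (p1,p2).1 ∧ (p1,p2).1 ≤ (p1,p2).2) ∧ (p1,p2).2 ≤ c from
      ⟨⟨hp.1.1, hp.1.2.trans hp.2.1⟩, hp.2.2⟩)]
    show (if a = x₁ ∧ p2 = z₁ ∧ u₁ ≤ p1 ∧ p1 ≤ v₁ then (1:R) else 0) *
        (if p1 = x₂ ∧ c = z₂ ∧ u₂ ≤ p2 ∧ p2 ≤ v₂ then (1:R) else 0) = _
    rw [ite_zero_mul_ite_zero, one_mul]
    by_cases hq : p1 = x₂ ∧ p2 = z₁
    · obtain ⟨rfl, rfl⟩ := hq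
      rw [if_pos rfl]
      refine if_congr ?_ rfl rfl
      constructor
      · rintro ⟨⟨h1, h2, h3, h4⟩, h5, h6, h7, h8⟩
        exact ⟨h1, h6, h3, h4, h7, h8⟩
      · rintro ⟨h1, h2, h3, h4, h5, h6⟩
        exact ⟨⟨h1, rfl, h3, h4⟩, rfl, h2, h5, h6⟩
    · rw [if_neg (fun hcon => hq ⟨hcon.2.1, hcon.1.2.1⟩),
        if_neg (fun hcon => hq (by simpa [Prod.ext_iff] using hcon))]
  rw [Finset.sum_congr rfl step, Finset.sum_ite_eq' ((Finset.Icc a b) ×ˢ (Finset.Icc b c))]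
  have happ : (if x₁ ≤ x₂ ∧ u₁ ≤ x₂ ∧ x₂ ≤ v₁ ∧ u₂ ≤ z₁ ∧ z₁ ≤ v₂ ∧ z₁ ≤ z₂ then
        theta R x₁ z₂ x₂ z₁ else (0 : Flag3 X → R)) ⟨(a,b,c), hab, hbc⟩
      = if x₁ ≤ x₂ ∧ u₁ ≤ x₂ ∧ x₂ ≤ v₁ ∧ u₂ ≤ z₁ ∧ z₁ ≤ v₂ ∧ z₁ ≤ z₂ then
          (if a = x₁ ∧ c = z₂ ∧ x₂ ≤ b ∧ b ≤ z₁ then (1:R) else 0) else 0 := by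
    by_cases h : x₁ ≤ x₂ ∧ u₁ ≤ x₂ ∧ x₂ ≤ v₁ ∧ u₂ ≤ z₁ ∧ z₁ ≤ v₂ ∧ z₁ ≤ z₂
    · rw [if_pos h, if_pos h]; rfl
    · rw [if_neg h, if_neg h]; rfl
  rw [happ]
  simp only [Finset.mem_product, Finset.mem_Icc]
  rw [← ite_and, ← ite_and]
  refine if_congr ?_ rfl rfl
  constructor
  · rintro ⟨⟨⟨hax2, hx2b⟩, hbz1, hz1c⟩, rfl, rfl, h3, h4, h5, h6⟩
    exact ⟨⟨hax2, h3, h4, h5, h6, hz1c⟩, rfl, rfl, hx2b, hbz1⟩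
  · rintro ⟨⟨h1, h2, h3, h4, h5, h6⟩, rfl, rfl, hx2b, hbz1⟩
    exact ⟨⟨⟨h1, hx2b⟩, hbz1, h6⟩, rfl, rfl, h2, h3, h4, h5⟩


lemma flag_ext {a b c a' b' c' : X} {h h'} :
    (⟨(a,b,c), h⟩ : Flag3 X) = (⟨(a',b',c'), h'⟩ : Flag3 X) ↔ a = a' ∧ b = b' ∧ c = c' := by
  simp [Subtype.ext_iff, Prod.ext_iff]

lemma e3_eq_theta (x y z : X) (h1 : x ≤ y) (h2 : y ≤ z) :
    e3 R (⟨(x,y,z), h1, h2⟩ : Flag3 X) = theta R x z y y := by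
  funext t
  obtain ⟨⟨a, b, c⟩, hab, hbc⟩ := t
  show (if _ = _ then (1:R) else 0) = _
  rw [theta]
  refine if_congr ?_ rfl rfl
  rw [flag_ext]
  constructor
  · rintro ⟨rfl, rfl, rfl⟩; exact ⟨rfl, rfl, le_rfl, le_rfl⟩
  · rintro ⟨rfl, rfl, hb1, hb2⟩; exact ⟨rfl, le_antisymm hb2 hb1, rfl⟩

lemma theta_decomp (x z u v : X) (hxu : x ≤ u) (hvz : v ≤ z) :
    theta R x z u v = ∑ b ∈ (Finset.Icc u v).attach,
      e3 R (⟨(x, b.1, z), hxu.trans (Finset.mem_Icc.mp b.2).1,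
        (Finset.mem_Icc.mp b.2).2.trans hvz⟩ : Flag3 X) := by
  funext t
  obtain ⟨⟨a, bb, c⟩, hab, hbc⟩ := t
  rw [Finset.sum_apply]
  by_cases hcond : a = x ∧ c = z ∧ u ≤ bb ∧ bb ≤ v
  · rw [theta, if_pos ⟨hcond.1, hcond.2.1, hcond.2.2.1, hcond.2.2.2⟩]
    rw [Finset.sum_eq_single (⟨bb, Finset.mem_Icc.mpr ⟨hcond.2.2.1, hcond.2.2.2⟩⟩ :
        {w // w ∈ Finset.Icc u v})]
    · rw [e3, if_pos (flag_ext.mpr ⟨hcond.1, rfl, hcond.2.1⟩)]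
    · intro b _ hb
      rw [e3, if_neg]
      intro hcon
      exact hb (Subtype.ext (flag_ext.mp hcon).2.1.symm)
    · intro hmem; exact absurd (Finset.mem_attach _ _) hmem
  · rw [show theta R x z u v ⟨(a,bb,c), hab, hbc⟩ =
        (if a = x ∧ c = z ∧ u ≤ bb ∧ bb ≤ v then (1:R) else 0) from rfl, if_neg hcond]
    refine (Finset.sum_eq_zero ?_).symm
    intro b _
    rw [e3, if_neg]
    intro hcon
    obtain ⟨rfl, rfl, rfl⟩ := flag_ext.mp hcon
    exact hcond ⟨rfl, rfl, (Finset.mem_Icc.mp b.2).1, (Finset.mem_Icc.mp b.2).2⟩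

lemma mul3_diagE (f g : Flag3 X → R) (s : X) :
    mul3 X R f g ⟨(s,s,s), le_rfl, le_rfl⟩ =
      f ⟨(s,s,s), le_rfl, le_rfl⟩ * g ⟨(s,s,s), le_rfl, le_rfl⟩ := by
  rw [mul3_eval]
  show ∑ p ∈ (Finset.Icc s s) ×ˢ (Finset.Icc s s), _ = _
  rw [Finset.Icc_self, Finset.singleton_product_singleton, Finset.sum_singleton,
    dif_pos (show (s ≤ ((s,s) : X × X).1 ∧ ((s,s) : X × X).1 ≤ ((s,s) : X × X).2) ∧
      ((s,s) : X × X).2 ≤ s from ⟨⟨le_rfl, le_rfl⟩, le_rfl⟩)]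

lemma mul3_coverL (f g : Flag3 X → R) (p q : X) (hle : p ≤ q) (hne : p ≠ q)
    (hpq : Finset.Icc p q = {p, q}) :
    mul3 X R f g ⟨(p,p,q), le_rfl, hle⟩ =
      f ⟨(p,p,p), le_rfl, le_rfl⟩ * g ⟨(p,p,q), le_rfl, hle⟩ +
      f ⟨(p,p,q), le_rfl, hle⟩ * g ⟨(p,q,q), hle, le_rfl⟩ := by
  rw [mul3_eval]
  show ∑ p' ∈ (Finset.Icc p p) ×ˢ (Finset.Icc p q), _ = _
  rw [Finset.Icc_self, hpq, Finset.sum_product, Finset.sum_singleton,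
    Finset.sum_insert (by simpa using hne), Finset.sum_singleton,
    dif_pos (show (p ≤ p ∧ p ≤ p) ∧ p ≤ q from ⟨⟨le_rfl, le_rfl⟩, hle⟩),
    dif_pos (show (p ≤ p ∧ p ≤ q) ∧ q ≤ q from ⟨⟨le_rfl, hle⟩, le_rfl⟩)]

lemma mul3_coverR (f g : Flag3 X → R) (p q : X) (hle : p ≤ q) (hne : p ≠ q)
    (hpq : Finset.Icc p q = {p, q}) :
    mul3 X R f g ⟨(p,q,q), hle, le_rfl⟩ =
      f ⟨(p,p,q), le_rfl, hle⟩ * g ⟨(p,q,q), hle, le_rfl⟩ +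
      f ⟨(p,q,q), hle, le_rfl⟩ * g ⟨(q,q,q), le_rfl, le_rfl⟩ := by
  rw [mul3_eval]
  show ∑ p' ∈ (Finset.Icc p q) ×ˢ (Finset.Icc q q), _ = _
  rw [Finset.Icc_self, hpq, Finset.sum_product,
    Finset.sum_insert (by simpa using hne)]
  simp only [Finset.sum_singleton]
  rw [dif_pos (show (p ≤ p ∧ p ≤ q) ∧ q ≤ q from ⟨⟨le_rfl, hle⟩, le_rfl⟩),
    dif_pos (show (p ≤ q ∧ q ≤ q) ∧ q ≤ q from ⟨⟨hle, le_rfl⟩, le_rfl⟩)]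



lemma three_le_ch {a w c : X} (h1 : a < w) (h2 : w < c) :
    (3 : ℕ∞) ≤ (Set.Icc a c).chainHeight (· < ·) := by
  have : ((3:ℕ) : ℕ∞) ≤ (Set.Icc a c).chainHeight (· < ·) := by
    have hch : IsChain (· < ·) ({a, w, c} : Set X) := by
      intro i hi j hj hij
      simp only [Set.mem_insert_iff, Set.mem_singleton_iff] at hi hj
      rcases hi with rfl | rfl | rfl <;> rcases hj with rfl | rfl | rfl <;>
        simp_all [h1.trans h2]
    have hsub : ({a, w, c} : Set X) ⊆ Set.Icc a c := by
      intro i hi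
      rcases (by simpa using hi : i = a ∨ i = w ∨ i = c) with rfl | rfl | rfl
      · exact Set.mem_Icc.mpr ⟨le_rfl, (h1.trans h2).le⟩
      · exact Set.mem_Icc.mpr ⟨h1.le, h2.le⟩
      · exact Set.mem_Icc.mpr ⟨(h1.trans h2).le, le_rfl⟩
    have hcard : ({a, w, c} : Set X).encard = 3 := by
      rw [Set.encard_insert_of_notMem (by simp [h1.ne, (h1.trans h2).ne]),
        Set.encard_pair h2.ne]
      norm_num
    calc ((3:ℕ) : ℕ∞) = ({a, w, c} : Set X).encard := by rw [hcard]; rfl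
      _ ≤ _ := Set.encard_le_chainHeight_of_isChain _ _ hsub hch
  exact_mod_cast this

lemma not_small_of_three {a c : X} (h : (3 : ℕ∞) ≤ (Set.Icc a c).chainHeight (· < ·)) :
    ¬ (ell a c < 2) := by
  rw [not_lt, ell]
  cases hch : (Set.Icc a c).chainHeight (· < ·) using ENat.recTopCoe with
  | top => simp
  | coe n =>
    rw [hch] at h
    have hn : 3 ≤ n := by exact_mod_cast h
    rw [show (1:ℕ∞) = ((1:ℕ):ℕ∞) from rfl, ← ENat.coe_sub]
    have : 2 ≤ n - 1 := by omega
    exact_mod_cast this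

lemma middle_of_not_small {a c : X} (h : ¬ (ell a c < 2)) : ∃ m, a < m ∧ m < c := by
  rw [not_lt, ell] at h
  have h3 : ((3:ℕ):ℕ∞) ≤ (Set.Icc a c).chainHeight (· < ·) := by
    cases hch : (Set.Icc a c).chainHeight (· < ·) using ENat.recTopCoe with
    | top => exact le_top
    | coe n =>
      rw [hch] at h
      rw [show (1:ℕ∞) = ((1:ℕ):ℕ∞) from rfl, ← ENat.coe_sub] at h
      have h2 : 2 ≤ n - 1 := by exact_mod_cast h
      exact_mod_cast (by omega : 3 ≤ n)
  obtain ⟨t, hts, hcard, -⟩ := Set.exists_isChain_of_le_chainHeight 3 h3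
  obtain ⟨p, q, r, hpq, hpr, hqr, rfl⟩ := Set.encard_eq_three.mp hcard
  have hp := hts (by simp : p ∈ ({p, q, r} : Set X))
  have hq := hts (by simp : q ∈ ({p, q, r} : Set X))
  have hr := hts (by simp : r ∈ ({p, q, r} : Set X))
  have key : ∀ m ∈ Set.Icc a c, m ≠ a → m ≠ c → ∃ m, a < m ∧ m < c :=
    fun m hm h1 h2 => ⟨m, lt_of_le_of_ne hm.1 (Ne.symm h1), lt_of_le_of_ne hm.2 h2⟩
  by_cases hp' : p ≠ a ∧ p ≠ c
  · exact key p hp hp'.1 hp'.2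
  by_cases hq' : q ≠ a ∧ q ≠ c
  · exact key q hq hq'.1 hq'.2
  exact key r hr (by grind) (by grind)

lemma pair_of_small {a c : X} (hlt : a < c) (h : ell a c < 2) :
    Finset.Icc a c = {a, c} := by
  ext w
  rw [Finset.mem_Icc, Finset.mem_insert, Finset.mem_singleton]
  constructor
  · rintro ⟨h1, h2⟩
    by_contra hw
    push_neg at hw
    exact (not_small_of_three (three_le_ch (h1.lt_of_ne (Ne.symm hw.1))
      (h2.lt_of_ne hw.2))) h
  · rintro (rfl | rfl)
    · exact ⟨le_rfl, hlt.le⟩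
    · exact ⟨hlt.le, le_rfl⟩

lemma ell_eq_one {u v : X} (hlt : u < v) (h : ell u v < 2) : ell u v = 1 := by
  have h2 : ((2:ℕ):ℕ∞) ≤ (Set.Icc u v).chainHeight (· < ·) := by
    have hsub : ({u, v} : Set X) ⊆ Set.Icc u v := by
      intro i hi
      rcases (by simpa using hi : i = u ∨ i = v) with rfl | rfl
      · exact Set.mem_Icc.mpr ⟨le_rfl, hlt.le⟩
      · exact Set.mem_Icc.mpr ⟨hlt.le, le_rfl⟩
    calc ((2:ℕ) : ℕ∞) = ({u, v} : Set X).encard := by rw [Set.encard_pair hlt.ne]; rfl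
      _ ≤ _ := Set.encard_le_chainHeight_of_isChain _ _ hsub (IsChain.pair hlt)
  rw [ell] at h ⊢
  cases hch : (Set.Icc u v).chainHeight (· < ·) using ENat.recTopCoe with
  | top => rw [hch] at h; simp at h
  | coe n =>
    rw [hch] at h h2
    have hn : 2 ≤ n := by exact_mod_cast h2
    rw [show (1:ℕ∞) = ((1:ℕ):ℕ∞) from rfl, ← ENat.coe_sub] at h ⊢
    have hlt2 : n - 1 < 2 := by exact_mod_cast h
    exact_mod_cast (by omega : n - 1 = 1)

/-- classification of small flags -/
lemma small_cases (t : Flag3 X) (h : ell t.1.1 t.1.2.2 < 2) :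
    (∃ s, t = ⟨(s,s,s), le_rfl, le_rfl⟩) ∨
    (∃ p q, ∃ hpq : p < q, Finset.Icc p q = {p, q} ∧
      (t = ⟨(p,p,q), le_rfl, hpq.le⟩ ∨ t = ⟨(p,q,q), hpq.le, le_rfl⟩)) := by
  obtain ⟨⟨a, b, c⟩, hab, hbc⟩ := t
  simp only at h hab hbc
  by_cases hac : a = c
  · left
    exact ⟨a, flag_ext.mpr ⟨rfl, le_antisymm (hac ▸ hbc) hab, hac.symm⟩⟩
  · right
    have hlt : a < c := (hab.trans hbc).lt_of_ne hac
    have hpair := pair_of_small hlt h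
    have hb : b ∈ Finset.Icc a c := Finset.mem_Icc.mpr ⟨hab, hbc⟩
    rw [hpair, Finset.mem_insert, Finset.mem_singleton] at hb
    refine ⟨a, c, hlt, hpair, ?_⟩
    rcases hb with rfl | rfl
    · exact Or.inl rfl
    · exact Or.inr rfl



variable (X R)

def C0set : Set (Flag3 X → R) := {h | ∃ f g, h = mul3 X R f g - mul3 X R g f}
def K1'sub : Submodule R (Flag3 X → R) := Submodule.span R (C0set X R)
def P1set : Set (Flag3 X → R) :=
  {h | ∃ f ∈ K1'sub X R, ∃ g ∈ K1'sub X R, h = mul3 X R f g}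
def Sym1 : Submodule R (Flag3 X → R) := Submodule.span R (P1set X R)
def J2alg : Submodule R (Flag3 X → R) := commSub X R (Sym1 X R) (Sym1 X R)

def K1pt : Submodule R (Flag3 X → R) where
  carrier := {f | ∀ s : X, f ⟨(s,s,s), le_rfl, le_rfl⟩ = 0}
  add_mem' := by intro f g hf hg s; simp [Pi.add_apply, hf s, hg s]
  zero_mem' := by intro s; rfl
  smul_mem' := by intro c f hf s; simp [Pi.smul_apply, hf s]

def Sympt : Submodule R (Flag3 X → R) where
  carrier := {f | (∀ s : X, f ⟨(s,s,s), le_rfl, le_rfl⟩ = 0) ∧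
    ∀ p q : X, ∀ hle : p ≤ q, p ≠ q → Finset.Icc p q = {p, q} →
      f ⟨(p,p,q), le_rfl, hle⟩ = f ⟨(p,q,q), hle, le_rfl⟩}
  add_mem' := by
    rintro f g ⟨hf1, hf2⟩ ⟨hg1, hg2⟩
    exact ⟨fun s => by simp [Pi.add_apply, hf1 s, hg1 s],
      fun p q hle hne hpq => by simp [Pi.add_apply, hf2 p q hle hne hpq, hg2 p q hle hne hpq]⟩
  zero_mem' := ⟨fun s => rfl, fun _ _ _ _ _ => rfl⟩
  smul_mem' := by
    rintro c f ⟨hf1, hf2⟩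
    exact ⟨fun s => by simp [Pi.smul_apply, hf1 s],
      fun p q hle hne hpq => by simp [Pi.smul_apply, hf2 p q hle hne hpq]⟩

variable {X R}

lemma mem_J3 {k : ℕ} {f : Flag3 X → R} :
    f ∈ J3 X R k ↔ ∀ t : Flag3 X, ell t.1.1 t.1.2.2 < (k : ℕ∞) → f t = 0 := Iff.rfl

lemma K1'_le_K1pt : K1'sub X R ≤ K1pt X R := by
  rw [K1'sub, Submodule.span_le]
  rintro h ⟨f, g, rfl⟩ s
  show mul3 X R f g _ - mul3 X R g f _ = 0
  rw [mul3_diagE, mul3_diagE, mul_comm, sub_self]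

lemma P1_subset_Sympt : P1set X R ⊆ (Sympt X R : Set (Flag3 X → R)) := by
  rintro h ⟨f, hf, g, hg, rfl⟩
  refine ⟨fun s => ?_, fun p q hle hne hpq => ?_⟩
  · rw [mul3_diagE, K1'_le_K1pt hf s, zero_mul]
  · rw [mul3_coverL f g p q hle hne hpq, mul3_coverR f g p q hle hne hpq,
      K1'_le_K1pt hf p, K1'_le_K1pt hg q, zero_mul, mul_zero, zero_add, add_zero]

lemma Sym1_le_Sympt : Sym1 X R ≤ Sympt X R := by
  rw [Sym1, Submodule.span_le]; exact P1_subset_Sympt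

lemma J2alg_le_J3 : J2alg X R ≤ J3 X R 2 := by
  rw [J2alg, commSub, Submodule.span_le]
  rintro h ⟨f, hf, g, hg, rfl⟩
  intro t ht
  obtain ⟨hfd, hfc⟩ := Sym1_le_Sympt hf
  obtain ⟨hgd, hgc⟩ := Sym1_le_Sympt hg
  rcases small_cases t ht with ⟨s, rfl⟩ | ⟨p, q, hpq, hpair, (rfl | rfl)⟩
  · show mul3 X R f g _ - mul3 X R g f _ = 0
    rw [mul3_diagE, mul3_diagE, mul_comm, sub_self]
  · show mul3 X R f g _ - mul3 X R g f _ = 0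
    rw [mul3_coverL f g p q hpq.le hpq.ne hpair, mul3_coverL g f p q hpq.le hpq.ne hpair,
      hfd p, hgd p, zero_mul, zero_mul, zero_add, zero_add,
      hfc p q hpq.le hpq.ne hpair, hgc p q hpq.le hpq.ne hpair, mul_comm, sub_self]
  · show mul3 X R f g _ - mul3 X R g f _ = 0
    rw [mul3_coverR f g p q hpq.le hpq.ne hpair, mul3_coverR g f p q hpq.le hpq.ne hpair,
      hfd q, hgd q, mul_zero, mul_zero, add_zero, add_zero,
      hfc p q hpq.le hpq.ne hpair, hgc p q hpq.le hpq.ne hpair, mul_comm, sub_self]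



lemma theta_mem_C0 (x y z : X) (h1 : x ≤ y) (h2 : y ≤ z) (hne : x ≠ z) :
    theta R x z y y ∈ C0set X R := by
  refine ⟨theta R x y y y, theta R y z y y, ?_⟩
  have hneg : ¬(y ≤ x ∧ y ≤ x ∧ x ≤ y ∧ y ≤ z ∧ z ≤ y ∧ z ≤ y) := by
    rintro ⟨hyx, -, -, -, hzy, -⟩
    exact hne ((le_antisymm h1 hyx).trans (le_antisymm h2 hzy))
  rw [theta_mul, theta_mul, if_pos ⟨h1, le_rfl, le_rfl, le_rfl, le_rfl, h2⟩,
    if_neg hneg, sub_zero]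

lemma e3_mem_C0 (x y z : X) (h1 : x ≤ y) (h2 : y ≤ z) (hne : x ≠ z) :
    e3 R (⟨(x,y,z), h1, h2⟩ : Flag3 X) ∈ C0set X R := by
  rw [e3_eq_theta (R := R) x y z h1 h2]
  exact theta_mem_C0 x y z h1 h2 hne

lemma tI_mem_P1 (x m : X) (h : x ≤ m) (hne : x ≠ m) : theta R x m x m ∈ P1set X R := by
  refine ⟨theta R x m x x, Submodule.subset_span (theta_mem_C0 x x m le_rfl h hne),
    theta R x m m m, Submodule.subset_span (theta_mem_C0 x m m h le_rfl hne), ?_⟩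
  rw [theta_mul, if_pos ⟨le_rfl, le_rfl, le_rfl, le_rfl, le_rfl, le_rfl⟩]

lemma e3mid_eq_theta_mul (x m z : X) (hxm : x ≤ m) (hmz : m ≤ z) (h1 : x ≠ m) (h2 : m ≠ z) :
    theta R x z m m ∈ P1set X R := by
  refine ⟨theta R x m m m, Submodule.subset_span (theta_mem_C0 x m m hxm le_rfl h1),
    theta R m z m m, Submodule.subset_span (theta_mem_C0 m m z le_rfl hmz h2), ?_⟩
  rw [theta_mul, if_pos ⟨hxm, le_rfl, le_rfl, le_rfl, le_rfl, hmz⟩]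

lemma e3_mid_mem_J2alg (x b z : X) (hxb : x < b) (hbz : b < z) :
    e3 R (⟨(x,b,z), hxb.le, hbz.le⟩ : Flag3 X) ∈ J2alg X R := by
  refine Submodule.subset_span ⟨theta R x b x b,
    Submodule.subset_span (tI_mem_P1 x b hxb.le hxb.ne),
    theta R b z b z, Submodule.subset_span (tI_mem_P1 b z hbz.le hbz.ne), ?_⟩
  have hneg : ¬(b ≤ x ∧ b ≤ x ∧ x ≤ z ∧ x ≤ z ∧ z ≤ b ∧ z ≤ b) := by
    rintro ⟨hbx, -⟩; exact hxb.not_ge hbx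
  rw [e3_eq_theta (R := R) x b z hxb.le hbz.le, theta_mul, theta_mul,
    if_pos ⟨hxb.le, hxb.le, le_rfl, le_rfl, hbz.le, hbz.le⟩, if_neg hneg, sub_zero]

lemma e3_left_mem_J2alg (x m z : X) (hxm : x < m) (hmz : m < z) :
    e3 R (⟨(x,x,z), le_rfl, (hxm.trans hmz).le⟩ : Flag3 X) ∈ J2alg X R := by
  have hθ : theta R x z x m ∈ J2alg X R := by
    refine Submodule.subset_span ⟨theta R x m x m,
      Submodule.subset_span (tI_mem_P1 x m hxm.le hxm.ne),
      theta R x z m m,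
      Submodule.subset_span (e3mid_eq_theta_mul x m z hxm.le hmz.le hxm.ne hmz.ne), ?_⟩
    have hneg : ¬(x ≤ x ∧ m ≤ x ∧ x ≤ m ∧ x ≤ z ∧ z ≤ m ∧ z ≤ m) := by
      rintro ⟨-, hmx, -⟩; exact hxm.not_ge hmx
    rw [theta_mul, theta_mul, if_pos ⟨le_rfl, le_rfl, hxm.le, le_rfl, le_rfl, hmz.le⟩,
      if_neg hneg, sub_zero]
  have hdec := theta_decomp (R := R) x z x m le_rfl hmz.le
  have hx_mem : x ∈ Finset.Icc x m := Finset.mem_Icc.mpr ⟨le_rfl, hxm.le⟩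
  have hxat : (⟨x, hx_mem⟩ : {w // w ∈ Finset.Icc x m}) ∈ (Finset.Icc x m).attach :=
    Finset.mem_attach _ _
  rw [← Finset.add_sum_erase _ _ hxat] at hdec
  have heq : e3 R (⟨(x,x,z), le_rfl, (hxm.trans hmz).le⟩ : Flag3 X)
      = theta R x z x m - ∑ b ∈ ((Finset.Icc x m).attach.erase ⟨x, hx_mem⟩),
          e3 R (⟨(x, b.1, z), le_rfl.trans (Finset.mem_Icc.mp b.2).1,
            (Finset.mem_Icc.mp b.2).2.trans hmz.le⟩ : Flag3 X) := by
    rw [hdec]; exact (add_sub_cancel_right _ _).symm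
  rw [heq]
  refine Submodule.sub_mem _ hθ (Submodule.sum_mem _ ?_)
  intro b hb
  have hbne : b.1 ≠ x := by
    intro hcon
    exact (Finset.mem_erase.mp hb).1 (Subtype.ext hcon)
  exact e3_mid_mem_J2alg x b.1 z
    (((Finset.mem_Icc.mp b.2).1).lt_of_ne (Ne.symm hbne))
    (((Finset.mem_Icc.mp b.2).2).trans_lt hmz)

lemma tIright_mem_P1 (m z : X) (h : m ≤ z) (hne : m ≠ z) : theta R m z m z ∈ P1set X R := by
  refine ⟨theta R m z m m, Submodule.subset_span (theta_mem_C0 m m z le_rfl h hne),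
    theta R m z z z, Submodule.subset_span (theta_mem_C0 m z z h le_rfl hne), ?_⟩
  rw [theta_mul, if_pos ⟨le_rfl, le_rfl, le_rfl, le_rfl, le_rfl, le_rfl⟩]

lemma e3_right_mem_J2alg (x m z : X) (hxm : x < m) (hmz : m < z) :
    e3 R (⟨(x,z,z), (hxm.trans hmz).le, le_rfl⟩ : Flag3 X) ∈ J2alg X R := by
  have hθ : theta R x z m z ∈ J2alg X R := by
    refine Submodule.subset_span ⟨theta R x z m m,
      Submodule.subset_span (e3mid_eq_theta_mul x m z hxm.le hmz.le hxm.ne hmz.ne),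
      theta R m z m z,
      Submodule.subset_span (tIright_mem_P1 m z hmz.le hmz.ne), ?_⟩
    have hneg : ¬(m ≤ x ∧ m ≤ x ∧ x ≤ z ∧ m ≤ z ∧ z ≤ m ∧ z ≤ z) := by
      rintro ⟨hmx, -⟩; exact hxm.not_ge hmx
    rw [theta_mul, theta_mul, if_pos ⟨hxm.le, le_rfl, le_rfl, hmz.le, le_rfl, le_rfl⟩,
      if_neg hneg, sub_zero]
  have hdec := theta_decomp (R := R) x z m z hxm.le le_rfl
  have hz_mem : z ∈ Finset.Icc m z := Finset.mem_Icc.mpr ⟨hmz.le, le_rfl⟩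
  have hzat : (⟨z, hz_mem⟩ : {w // w ∈ Finset.Icc m z}) ∈ (Finset.Icc m z).attach :=
    Finset.mem_attach _ _
  rw [← Finset.add_sum_erase _ _ hzat] at hdec
  have heq : e3 R (⟨(x,z,z), (hxm.trans hmz).le, le_rfl⟩ : Flag3 X)
      = theta R x z m z - ∑ b ∈ ((Finset.Icc m z).attach.erase ⟨z, hz_mem⟩),
          e3 R (⟨(x, b.1, z), hxm.le.trans (Finset.mem_Icc.mp b.2).1,
            (Finset.mem_Icc.mp b.2).2.trans le_rfl⟩ : Flag3 X) := by
    rw [hdec]; exact (add_sub_cancel_right _ _).symm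
  rw [heq]
  refine Submodule.sub_mem _ hθ (Submodule.sum_mem _ ?_)
  intro b hb
  have hbne : b.1 ≠ z := by
    intro hcon
    exact (Finset.mem_erase.mp hb).1 (Subtype.ext hcon)
  exact e3_mid_mem_J2alg x b.1 z
    (hxm.trans_le (Finset.mem_Icc.mp b.2).1)
    (((Finset.mem_Icc.mp b.2).2).lt_of_ne hbne)

lemma e3_mem_J2alg (x b z : X) (hxb : x ≤ b) (hbz : b ≤ z) (hns : ¬ ell x z < 2) :
    e3 R (⟨(x,b,z), hxb, hbz⟩ : Flag3 X) ∈ J2alg X R := by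
  obtain ⟨m, hxm, hmz⟩ := middle_of_not_small hns
  by_cases hbx : x = b
  · subst hbx
    exact e3_left_mem_J2alg x m z hxm hmz
  · by_cases hbz' : b = z
    · subst hbz'
      exact e3_right_mem_J2alg x m b hxm hmz
    · exact e3_mid_mem_J2alg x b z (hxb.lt_of_ne hbx) (hbz.lt_of_ne hbz')



lemma J3_le_J2alg [Fintype X] : J3 X R 2 ≤ J2alg X R := by
  intro f hf
  letI : Fintype (Flag3 X) := Fintype.ofFinite _
  have hdec : f = ∑ t : Flag3 X, f t • e3 R t := by
    funext t0
    rw [Finset.sum_apply]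
    rw [Finset.sum_eq_single t0]
    · show f t0 = f t0 • (if t0 = t0 then (1:R) else 0)
      rw [if_pos rfl, smul_eq_mul, mul_one]
    · intro t _ hne
      show f t • (if t0 = t then (1:R) else 0) = 0
      rw [if_neg (fun hcon => hne hcon.symm), smul_zero]
    · intro hmem; exact absurd (Finset.mem_univ _) hmem
  rw [hdec]
  refine Submodule.sum_mem _ (fun t _ => ?_)
  by_cases hsm : ell t.1.1 t.1.2.2 < 2
  · rw [mem_J3.mp hf t hsm, zero_smul]
    exact Submodule.zero_mem _
  · refine Submodule.smul_mem _ _ ?_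
    obtain ⟨⟨a, b, c⟩, hab, hbc⟩ := t
    exact e3_mem_J2alg a b c hab hbc hsm

lemma J2alg_eq_J3 [Fintype X] : J2alg X R = J3 X R 2 :=
  le_antisymm J2alg_le_J3 (J3_le_J2alg)



lemma ell_diag_lt (s : X) : ell s s < 2 := by
  by_contra h
  obtain ⟨m, h1, h2⟩ := middle_of_not_small h
  exact absurd (h1.trans h2) (lt_irrefl s)

lemma ell_cover_lt {p q : X} (hpq : p < q) (hpair : Finset.Icc p q = {p, q}) :
    ell p q < 2 := by
  by_contra h
  obtain ⟨m, h1, h2⟩ := middle_of_not_small h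
  have : m ∈ Finset.Icc p q := Finset.mem_Icc.mpr ⟨h1.le, h2.le⟩
  rw [hpair, Finset.mem_insert, Finset.mem_singleton] at this
  rcases this with rfl | rfl
  · exact absurd h1 (lt_irrefl _)
  · exact absurd h2 (lt_irrefl _)

lemma enat_one_lt_two : (1 : ℕ∞) < 2 := by exact_mod_cast Nat.one_lt_two

end Aux

section Transport
variable {P Q R : Type*} [PartialOrder P] [Fintype P] [DecidableEq P] [LocallyFiniteOrder P]
  [PartialOrder Q] [Fintype Q] [DecidableEq Q] [LocallyFiniteOrder Q] [CommRing R]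
variable (Φ : (Flag3 P → R) ≃ₗ[R] (Flag3 Q → R))

lemma map_C0 (hΦ : ∀ f g : Flag3 P → R, Φ (mul3 P R f g) = mul3 Q R (Φ f) (Φ g)) :
    ⇑Φ '' (C0set P R) = C0set Q R := by
  ext h
  constructor
  · rintro ⟨h', ⟨f, g, rfl⟩, rfl⟩
    exact ⟨Φ f, Φ g, by rw [map_sub, hΦ, hΦ]⟩
  · rintro ⟨f', g', rfl⟩
    refine ⟨mul3 P R (Φ.symm f') (Φ.symm g') - mul3 P R (Φ.symm g') (Φ.symm f'),
      ⟨Φ.symm f', Φ.symm g', rfl⟩, ?_⟩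
    rw [map_sub, hΦ, hΦ, Φ.apply_symm_apply, Φ.apply_symm_apply]

lemma map_K1 (hΦ : ∀ f g : Flag3 P → R, Φ (mul3 P R f g) = mul3 Q R (Φ f) (Φ g)) :
    Submodule.map (Φ : (Flag3 P → R) →ₗ[R] (Flag3 Q → R)) (K1'sub P R) = K1'sub Q R := by
  rw [K1'sub, K1'sub, Submodule.map_span]
  congr 1
  rw [LinearEquiv.coe_coe, map_C0 Φ hΦ]

lemma map_P1 (hΦ : ∀ f g : Flag3 P → R, Φ (mul3 P R f g) = mul3 Q R (Φ f) (Φ g)) :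
    ⇑Φ '' (P1set P R) = P1set Q R := by
  ext h
  constructor
  · rintro ⟨h', ⟨f, hf, g, hg, rfl⟩, rfl⟩
    refine ⟨Φ f, ?_, Φ g, ?_, hΦ f g⟩
    · rw [← map_K1 Φ hΦ]; exact Submodule.mem_map_of_mem hf
    · rw [← map_K1 Φ hΦ]; exact Submodule.mem_map_of_mem hg
  · rintro ⟨f', hf', g', hg', rfl⟩
    rw [← map_K1 Φ hΦ] at hf' hg'
    refine ⟨mul3 P R (Φ.symm f') (Φ.symm g'),
      ⟨Φ.symm f', ?_, Φ.symm g', ?_, rfl⟩, ?_⟩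
    · exact (Submodule.mem_map_equiv _).mp hf'
    · exact (Submodule.mem_map_equiv _).mp hg'
    · rw [hΦ, Φ.apply_symm_apply, Φ.apply_symm_apply]

lemma map_J3eq (hΦ : ∀ f g : Flag3 P → R, Φ (mul3 P R f g) = mul3 Q R (Φ f) (Φ g)) :
    Submodule.map (Φ : (Flag3 P → R) →ₗ[R] (Flag3 Q → R)) (J3 P R 2) = J3 Q R 2 := by
  have hSym1 : Submodule.map (Φ : (Flag3 P → R) →ₗ[R] (Flag3 Q → R)) (Sym1 P R)
      = Sym1 Q R := by
    rw [Sym1, Sym1, Submodule.map_span]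
    congr 1
    rw [LinearEquiv.coe_coe, map_P1 Φ hΦ]
  have hgen : ⇑Φ '' {h | ∃ f ∈ Sym1 P R, ∃ g ∈ Sym1 P R,
      h = mul3 P R f g - mul3 P R g f}
      = {h | ∃ f ∈ Sym1 Q R, ∃ g ∈ Sym1 Q R, h = mul3 Q R f g - mul3 Q R g f} := by
    ext h
    constructor
    · rintro ⟨h', ⟨f, hf, g, hg, rfl⟩, rfl⟩
      refine ⟨Φ f, ?_, Φ g, ?_, by rw [map_sub, hΦ, hΦ]⟩
      · rw [← hSym1]; exact Submodule.mem_map_of_mem hf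
      · rw [← hSym1]; exact Submodule.mem_map_of_mem hg
    · rintro ⟨f', hf', g', hg', rfl⟩
      rw [← hSym1] at hf' hg'
      refine ⟨mul3 P R (Φ.symm f') (Φ.symm g') - mul3 P R (Φ.symm g') (Φ.symm f'),
        ⟨Φ.symm f', (Submodule.mem_map_equiv _).mp hf',
         Φ.symm g', (Submodule.mem_map_equiv _).mp hg', rfl⟩, ?_⟩
      rw [map_sub, hΦ, hΦ, Φ.apply_symm_apply, Φ.apply_symm_apply]
  have : Submodule.map (Φ : (Flag3 P → R) →ₗ[R] (Flag3 Q → R)) (J2alg P R)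
      = J2alg Q R := by
    rw [J2alg, J2alg, commSub, commSub, Submodule.map_span]
    exact congrArg (Submodule.span R) (by rw [LinearEquiv.coe_coe]; exact hgen)
  rwa [J2alg_eq_J3, J2alg_eq_J3] at this

end Transport

/-- For finite posets `P`, `Q`, an indecomposable commutative ring `R` and
an isomorphism `Φ : I^3(P,R) → I^3(Q,R)`: for all `x < y` with `l(x,y) = 1` there exist
`u < v` with `l(u,v) = 1` and `σ ∈ J^3_2(Q,R)` such that
`Φ(e_{xxy} + e_{xyy}) = e_{uuv} + e_{uvv} + σ`. -/
theorem iso_image_of_cover_idempotent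
    {P Q R : Type*} [PartialOrder P] [Fintype P] [DecidableEq P] [LocallyFiniteOrder P]
    [PartialOrder Q] [Fintype Q] [DecidableEq Q] [LocallyFiniteOrder Q]
    [CommRing R] [Nontrivial R] (hR : ∀ r : R, r * r = r → r = 0 ∨ r = 1)
    (Φ : (Flag3 P → R) ≃ₗ[R] (Flag3 Q → R))
    (hΦ : ∀ f g : Flag3 P → R, Φ (mul3 P R f g) = mul3 Q R (Φ f) (Φ g)) :
    ∀ x y : P, ∀ hxy : x < y, ell x y = 1 →
      ∃ u v : Q, ∃ huv : u < v, ell u v = 1 ∧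
        ∃ σ ∈ J3 Q R 2,
          Φ (e3 R (⟨(x, x, y), le_rfl, hxy.le⟩ : Flag3 P) +
              e3 R (⟨(x, y, y), hxy.le, le_rfl⟩ : Flag3 P)) =
            e3 R (⟨(u, u, v), le_rfl, huv.le⟩ : Flag3 Q) +
              e3 R (⟨(u, v, v), huv.le, le_rfl⟩ : Flag3 Q) + σ := by



  intro x y hxy hell
  have hxyne : x ≠ y := hxy.ne
  have hellxy : ell x y < 2 := by rw [hell]; exact enat_one_lt_two
  have hIccxy : Finset.Icc x y = {x, y} := pair_of_small hxy hellxy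
  set e : Flag3 P → R := e3 R (⟨(x, x, y), le_rfl, hxy.le⟩ : Flag3 P) +
      e3 R (⟨(x, y, y), hxy.le, le_rfl⟩ : Flag3 P) with he_def
  -- e as a theta
  have he_theta : e = theta R x y x y := by
    funext t
    obtain ⟨⟨a, b, c⟩, hab, hbc⟩ := t
    simp only [he_def, Pi.add_apply, e3, theta, Subtype.mk.injEq, Prod.mk.injEq]
    by_cases h1 : a = x ∧ b = x ∧ c = y
    · rw [if_pos h1, if_neg (fun h2 => hxyne (h1.2.1.symm.trans h2.2.1)), add_zero,
        if_pos ⟨h1.1, h1.2.2, h1.2.1.ge, h1.2.1.le.trans hxy.le⟩]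
    · rw [if_neg h1]
      by_cases h2 : a = x ∧ b = y ∧ c = y
      · rw [if_pos h2, zero_add, if_pos ⟨h2.1, h2.2.2, hxy.le.trans h2.2.1.ge, h2.2.1.le⟩]
      · have h3n : ¬(a = x ∧ c = y ∧ x ≤ b ∧ b ≤ y) := by
          rintro ⟨ha, hc, hxb, hby⟩
          have hm : b ∈ Finset.Icc x y := Finset.mem_Icc.mpr ⟨hxb, hby⟩
          rw [hIccxy, Finset.mem_insert, Finset.mem_singleton] at hm
          rcases hm with hbx | hby'
          · exact h1 ⟨ha, hbx, hc⟩
          · exact h2 ⟨ha, hby', hc⟩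
        rw [if_neg h2, add_zero, if_neg h3n]
  have he_idem : mul3 P R e e = e := by
    rw [he_theta, theta_mul, if_pos ⟨le_rfl, le_rfl, hxy.le, hxy.le, le_rfl, le_rfl⟩]
  have hediag : ∀ s : P, e ⟨(s,s,s), le_rfl, le_rfl⟩ = 0 := by
    intro s
    simp only [he_def, Pi.add_apply, e3, Subtype.mk.injEq, Prod.mk.injEq]
    rw [if_neg (fun h2 => hxyne (h2.1.symm.trans h2.2.2)),
      if_neg (fun h2 => hxyne (h2.1.symm.trans h2.2.1)), add_zero]
  have hevals : ∀ p' q' : P, ∀ h' : p' < q',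
      (e ⟨(p',p',q'), le_rfl, h'.le⟩ = if p' = x ∧ q' = y then 1 else 0)
    ∧ (e ⟨(p',q',q'), h'.le, le_rfl⟩ = if p' = x ∧ q' = y then 1 else 0) := by
    intro p' q' h'
    constructor
    · simp only [he_def, Pi.add_apply, e3, Subtype.mk.injEq, Prod.mk.injEq]
      by_cases hc : p' = x ∧ q' = y
      · rw [if_pos ⟨hc.1, hc.1, hc.2⟩,
          if_neg (fun h2 => hxyne (h2.1.symm.trans h2.2.1)), add_zero, if_pos hc]
      · rw [if_neg (fun h2 => hc ⟨h2.1, h2.2.2⟩),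
          if_neg (fun h2 => hxyne (h2.1.symm.trans h2.2.1)), add_zero, if_neg hc]
    · simp only [he_def, Pi.add_apply, e3, Subtype.mk.injEq, Prod.mk.injEq]
      rw [if_neg (fun h2 => hxyne (h2.2.1.symm.trans h2.2.2))]
      by_cases hc : p' = x ∧ q' = y
      · rw [if_pos ⟨hc.1, hc.2, hc.2⟩, zero_add, if_pos hc]
      · rw [if_neg (fun h2 => hc ⟨h2.1, h2.2.1⟩), zero_add, if_neg hc]
  set ε : Flag3 Q → R := Φ e with hε_def
  have hε_idem : mul3 Q R ε ε = ε := by rw [← hΦ, he_idem]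
  -- diag of ε is zero
  have he_comm : e = (mul3 P R (theta R x x x x) (theta R x y x x)
        - mul3 P R (theta R x y x x) (theta R x x x x))
      + (mul3 P R (theta R x y y y) (theta R y y y y)
        - mul3 P R (theta R y y y y) (theta R x y y y)) := by
    have hneg1 : ¬(x ≤ x ∧ x ≤ x ∧ x ≤ x ∧ x ≤ y ∧ y ≤ x ∧ y ≤ x) := by
      rintro ⟨-, -, -, -, hyx, -⟩; exact hxyne (le_antisymm hxy.le hyx)
    have hneg2 : ¬(y ≤ x ∧ y ≤ x ∧ x ≤ y ∧ y ≤ y ∧ y ≤ y ∧ y ≤ y) := by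
      rintro ⟨hyx, -⟩; exact hxyne (le_antisymm hxy.le hyx)
    rw [theta_mul, theta_mul, theta_mul, theta_mul,
      if_pos ⟨le_rfl, le_rfl, le_rfl, le_rfl, le_rfl, hxy.le⟩, if_neg hneg1,
      if_pos ⟨hxy.le, le_rfl, le_rfl, le_rfl, le_rfl, le_rfl⟩, if_neg hneg2,
      sub_zero, sub_zero, he_def,
      e3_eq_theta (R := R) x x y le_rfl hxy.le, e3_eq_theta (R := R) x y y hxy.le le_rfl]
  have hdiagε : ∀ s : Q, ε ⟨(s,s,s), le_rfl, le_rfl⟩ = 0 := by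
    intro s
    have : ε = (mul3 Q R (Φ (theta R x x x x)) (Φ (theta R x y x x))
          - mul3 Q R (Φ (theta R x y x x)) (Φ (theta R x x x x)))
        + (mul3 Q R (Φ (theta R x y y y)) (Φ (theta R y y y y))
          - mul3 Q R (Φ (theta R y y y y)) (Φ (theta R x y y y))) := by
      rw [hε_def, he_comm, map_add, map_sub, map_sub, hΦ, hΦ, hΦ, hΦ]
    rw [this]
    simp only [Pi.add_apply, Pi.sub_apply]
    rw [mul3_diagE, mul3_diagE, mul3_diagE, mul3_diagE]
    ring
  -- cover dichotomy for ε
  have hcover : ∀ p q : Q, ∀ hpq : p < q, Finset.Icc p q = {p, q} →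
      (ε ⟨(p,p,q), le_rfl, hpq.le⟩ = ε ⟨(p,q,q), hpq.le, le_rfl⟩ ∧
       (ε ⟨(p,p,q), le_rfl, hpq.le⟩ = 0 ∨ ε ⟨(p,p,q), le_rfl, hpq.le⟩ = 1)) := by
    intro p q hpq hpair
    have h1 : ε ⟨(p,p,q), le_rfl, hpq.le⟩ =
        ε ⟨(p,p,q), le_rfl, hpq.le⟩ * ε ⟨(p,q,q), hpq.le, le_rfl⟩ := by
      conv_lhs => rw [← hε_idem]
      rw [mul3_coverL ε ε p q hpq.le hpq.ne hpair, hdiagε p, zero_mul, zero_add]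
    have h2 : ε ⟨(p,q,q), hpq.le, le_rfl⟩ =
        ε ⟨(p,p,q), le_rfl, hpq.le⟩ * ε ⟨(p,q,q), hpq.le, le_rfl⟩ := by
      conv_lhs => rw [← hε_idem]
      rw [mul3_coverR ε ε p q hpq.le hpq.ne hpair, hdiagε q, mul_zero, add_zero]
    have hsym := h1.trans h2.symm
    refine ⟨hsym, hR _ ?_⟩
    conv_rhs => rw [h1]
    rw [hsym]
  -- transport of J3 2
  have hfwd : ∀ f, f ∈ J3 P R 2 → Φ f ∈ J3 Q R 2 := by
    intro f hf
    rw [← map_J3eq Φ hΦ]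
    exact Submodule.mem_map_of_mem hf
  have hbwd : ∀ g, g ∈ J3 Q R 2 → Φ.symm g ∈ J3 P R 2 := by
    intro g hg
    rw [← map_J3eq Φ hΦ] at hg
    exact (Submodule.mem_map_equiv _).mp hg
  -- ε is not in J3 2
  have hεnot : ε ∉ J3 Q R 2 := by
    intro hc
    have h0 := hbwd ε hc
    rw [hε_def, Φ.symm_apply_apply] at h0
    have h1 := mem_J3.mp h0 ⟨(x,x,y), le_rfl, hxy.le⟩ hellxy
    rw [he_def] at h1
    simp only [Pi.add_apply] at h1
    rw [show e3 R (⟨(x, x, y), le_rfl, hxy.le⟩ : Flag3 P)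
        ⟨(x, x, y), le_rfl, hxy.le⟩ = 1 from if_pos rfl,
      show e3 R (⟨(x, y, y), hxy.le, le_rfl⟩ : Flag3 P)
        ⟨(x, x, y), le_rfl, hxy.le⟩ = 0 from
        if_neg (fun hc2 => hxyne ((flag_ext.mp hc2).2.1))] at h1
    exact one_ne_zero (by rwa [add_zero] at h1)
  obtain ⟨t, hts, htne⟩ : ∃ t : Flag3 Q, ell t.1.1 t.1.2.2 < 2 ∧ ε t ≠ 0 := by
    by_contra hcon
    push_neg at hcon
    exact hεnot (mem_J3.mpr hcon)
  rcases small_cases t hts with ⟨s, rfl⟩ | ⟨u, v, huv, hpair, hshape⟩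
  · exact absurd (hdiagε s) htne
  have hsmalluv : ell u v < 2 := ell_cover_lt huv hpair
  have hεuv : ε ⟨(u,u,v), le_rfl, huv.le⟩ = 1 ∧ ε ⟨(u,v,v), huv.le, le_rfl⟩ = 1 := by
    obtain ⟨hsym, hd⟩ := hcover u v huv hpair
    have hne0 : ε ⟨(u,u,v), le_rfl, huv.le⟩ ≠ 0 := by
      rcases hshape with rfl | rfl
      · exact htne
      · rw [hsym]; exact htne
    rcases hd with h0 | h1
    · exact absurd h0 hne0
    · exact ⟨h1, hsym ▸ h1⟩
  refine ⟨u, v, huv, ell_eq_one huv hsmalluv,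
    ε - e3 R (⟨(u, u, v), le_rfl, huv.le⟩ : Flag3 Q)
      - e3 R (⟨(u, v, v), huv.le, le_rfl⟩ : Flag3 Q), ?_, by abel⟩
  -- σ ∈ J3 2
  rw [mem_J3]
  intro t' ht'
  rcases small_cases t' ht' with ⟨s, rfl⟩ | ⟨p, q, hpq, hpair', hsh⟩
  · simp only [Pi.sub_apply]
    rw [hdiagε s,
      show e3 R (⟨(u, u, v), le_rfl, huv.le⟩ : Flag3 Q) ⟨(s,s,s), le_rfl, le_rfl⟩ = 0
        from if_neg (fun hc => huv.ne ((flag_ext.mp hc).1.symm.trans (flag_ext.mp hc).2.2)),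
      show e3 R (⟨(u, v, v), huv.le, le_rfl⟩ : Flag3 Q) ⟨(s,s,s), le_rfl, le_rfl⟩ = 0
        from if_neg (fun hc => huv.ne ((flag_ext.mp hc).1.symm.trans (flag_ext.mp hc).2.2)),
      sub_zero, sub_zero]
  · by_cases hsame : p = u ∧ q = v
    · obtain ⟨rfl, rfl⟩ := hsame
      rcases hsh with rfl | rfl
      · simp only [Pi.sub_apply]
        rw [hεuv.1,
          show e3 R (⟨(p, p, q), le_rfl, hpq.le⟩ : Flag3 Q) ⟨(p,p,q), le_rfl, hpq.le⟩ = 1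
            from if_pos rfl,
          show e3 R (⟨(p, q, q), hpq.le, le_rfl⟩ : Flag3 Q) ⟨(p,p,q), le_rfl, hpq.le⟩ = 0
            from if_neg (fun hc => hpq.ne ((flag_ext.mp hc).2.1)), sub_zero, sub_self]
      · simp only [Pi.sub_apply]
        rw [hεuv.2,
          show e3 R (⟨(p, p, q), le_rfl, hpq.le⟩ : Flag3 Q) ⟨(p,q,q), hpq.le, le_rfl⟩ = 0
            from if_neg (fun hc => hpq.ne ((flag_ext.mp hc).2.1.symm)),
          show e3 R (⟨(p, q, q), hpq.le, le_rfl⟩ : Flag3 Q) ⟨(p,q,q), hpq.le, le_rfl⟩ = 1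
            from if_pos rfl, sub_zero, sub_self]
    · -- other covers vanish
      have hε0 : ε ⟨(p,p,q), le_rfl, hpq.le⟩ = 0 := by
        obtain ⟨hsym', hd'⟩ := hcover p q hpq hpair'
        rcases hd' with h0 | h1
        · exact h0
        · exfalso
          set w : Flag3 Q → R := e3 R (⟨(u, u, v), le_rfl, huv.le⟩ : Flag3 Q)
              + e3 R (⟨(u, v, v), huv.le, le_rfl⟩ : Flag3 Q) with hw_def
          have hwdiag : ∀ s : Q, w ⟨(s,s,s), le_rfl, le_rfl⟩ = 0 := by
            intro s
            simp only [hw_def, Pi.add_apply, e3, Subtype.mk.injEq, Prod.mk.injEq]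
            rw [if_neg (fun h2 => huv.ne (h2.1.symm.trans h2.2.2)),
              if_neg (fun h2 => huv.ne (h2.1.symm.trans h2.2.1)), add_zero]
          have hwvals : ∀ p' q' : Q, ∀ h' : p' < q',
              (w ⟨(p',p',q'), le_rfl, h'.le⟩ = if p' = u ∧ q' = v then 1 else 0)
            ∧ (w ⟨(p',q',q'), h'.le, le_rfl⟩ = if p' = u ∧ q' = v then 1 else 0) := by
            intro p' q' h'
            constructor
            · simp only [hw_def, Pi.add_apply, e3, Subtype.mk.injEq, Prod.mk.injEq]
              by_cases hc : p' = u ∧ q' = v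
              · rw [if_pos ⟨hc.1, hc.1, hc.2⟩,
                  if_neg (fun h2 => huv.ne (h2.1.symm.trans h2.2.1)), add_zero, if_pos hc]
              · rw [if_neg (fun h2 => hc ⟨h2.1, h2.2.2⟩),
                  if_neg (fun h2 => huv.ne (h2.1.symm.trans h2.2.1)), add_zero, if_neg hc]
            · simp only [hw_def, Pi.add_apply, e3, Subtype.mk.injEq, Prod.mk.injEq]
              rw [if_neg (fun h2 => huv.ne (h2.2.1.symm.trans h2.2.2))]
              by_cases hc : p' = u ∧ q' = v
              · rw [if_pos ⟨hc.1, hc.2, hc.2⟩, zero_add, if_pos hc]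
              · rw [if_neg (fun h2 => hc ⟨h2.1, h2.2.1⟩), zero_add, if_neg hc]
          have hw_small : mul3 Q R ε w - w ∈ J3 Q R 2 := by
            rw [mem_J3]
            intro t2 ht2
            rcases small_cases t2 ht2 with ⟨s, rfl⟩ | ⟨p', q', h', hpair2, hsh2⟩
            · simp only [Pi.sub_apply]
              rw [mul3_diagE, hdiagε s, zero_mul, hwdiag s, sub_zero]
            · rcases hsh2 with rfl | rfl
              · simp only [Pi.sub_apply]
                rw [mul3_coverL ε w p' q' h'.le h'.ne hpair2, hdiagε p', zero_mul, zero_add,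
                  (hwvals p' q' h').2, (hwvals p' q' h').1]
                by_cases hc : p' = u ∧ q' = v
                · rw [if_pos hc, mul_one,
                    show (⟨(p',p',q'), le_rfl, h'.le⟩ : Flag3 Q) = ⟨(u,u,v), le_rfl, huv.le⟩
                      from flag_ext.mpr ⟨hc.1, hc.1, hc.2⟩, hεuv.1, sub_self]
                · rw [if_neg hc, mul_zero, sub_zero]
              · simp only [Pi.sub_apply]
                rw [mul3_coverR ε w p' q' h'.le h'.ne hpair2, hwdiag q', mul_zero, add_zero,
                  (hwvals p' q' h').2]
                by_cases hc : p' = u ∧ q' = v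
                · rw [if_pos hc, mul_one,
                    show (⟨(p',p',q'), le_rfl, h'.le⟩ : Flag3 Q) = ⟨(u,u,v), le_rfl, huv.le⟩
                      from flag_ext.mpr ⟨hc.1, hc.1, hc.2⟩, hεuv.1, sub_self]
                · rw [if_neg hc, mul_zero, sub_zero]
          set z : Flag3 P → R := Φ.symm w with hz_def
          have hzw : Φ z = w := Φ.apply_symm_apply w
          have hj1 : mul3 P R e z - z ∈ J3 P R 2 := by
            have hΦj : Φ (mul3 P R e z - z) = mul3 Q R ε w - w := by
              rw [map_sub, hΦ, hzw, ← hε_def]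
            have h2 := hbwd _ hw_small
            rw [← hΦj, Φ.symm_apply_apply] at h2
            exact h2
          have hzdiag : ∀ s : P, z ⟨(s,s,s), le_rfl, le_rfl⟩ = 0 := by
            intro s
            have h0 := mem_J3.mp hj1 ⟨(s,s,s), le_rfl, le_rfl⟩ (ell_diag_lt s)
            simp only [Pi.sub_apply] at h0
            rw [mul3_diagE, hediag s, zero_mul] at h0
            exact (sub_eq_zero.mp h0).symm
          have hzrel : ∀ p' q' : P, ∀ h' : p' < q', Finset.Icc p' q' = {p', q'} →
              (z ⟨(p',p',q'), le_rfl, h'.le⟩ =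
                (if p' = x ∧ q' = y then 1 else 0) * z ⟨(p',q',q'), h'.le, le_rfl⟩)
            ∧ (z ⟨(p',q',q'), h'.le, le_rfl⟩ =
                (if p' = x ∧ q' = y then 1 else 0) * z ⟨(p',q',q'), h'.le, le_rfl⟩) := by
            intro p' q' h' hpair2
            have h0L := mem_J3.mp hj1 ⟨(p',p',q'), le_rfl, h'.le⟩ (ell_cover_lt h' hpair2)
            have h0R := mem_J3.mp hj1 ⟨(p',q',q'), h'.le, le_rfl⟩ (ell_cover_lt h' hpair2)
            simp only [Pi.sub_apply] at h0L h0R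
            rw [mul3_coverL e z p' q' h'.le h'.ne hpair2, hediag p', zero_mul, zero_add,
              (hevals p' q' h').1] at h0L
            rw [mul3_coverR e z p' q' h'.le h'.ne hpair2, hzdiag q', mul_zero, add_zero,
              (hevals p' q' h').1] at h0R
            exact ⟨(sub_eq_zero.mp h0L).symm, (sub_eq_zero.mp h0R).symm⟩
          set c : R := z ⟨(x,y,y), hxy.le, le_rfl⟩ with hc_def
          have hzc : z - c • e ∈ J3 P R 2 := by
            rw [mem_J3]
            intro t3 ht3
            rcases small_cases t3 ht3 with ⟨s, rfl⟩ | ⟨p', q', h', hpair3, hsh3⟩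
            · simp only [Pi.sub_apply, Pi.smul_apply, smul_eq_mul]
              rw [hzdiag s, hediag s, mul_zero, sub_zero]
            · have hrel := hzrel p' q' h' hpair3
              by_cases hcx : p' = x ∧ q' = y
              · have hfl2 : (⟨(p',q',q'), h'.le, le_rfl⟩ : Flag3 P)
                    = ⟨(x,y,y), hxy.le, le_rfl⟩ := flag_ext.mpr ⟨hcx.1, hcx.2, hcx.2⟩
                rcases hsh3 with rfl | rfl
                · simp only [Pi.sub_apply, Pi.smul_apply, smul_eq_mul]
                  rw [hrel.1, (hevals p' q' h').1, if_pos hcx, one_mul, mul_one, hfl2]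
                  exact sub_self _
                · simp only [Pi.sub_apply, Pi.smul_apply, smul_eq_mul]
                  rw [(hevals p' q' h').2, if_pos hcx, mul_one, hfl2]
                  exact sub_self _
              · rcases hsh3 with rfl | rfl
                · simp only [Pi.sub_apply, Pi.smul_apply, smul_eq_mul]
                  rw [hrel.1, (hevals p' q' h').1, if_neg hcx, zero_mul, mul_zero, sub_zero]
                · simp only [Pi.sub_apply, Pi.smul_apply, smul_eq_mul]
                  rw [hrel.2, (hevals p' q' h').2, if_neg hcx, zero_mul, mul_zero, sub_zero]
          have hΦzc : Φ (z - c • e) = w - c • ε := by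
            rw [map_sub, map_smul, hzw, ← hε_def]
          have hmem2 := hfwd _ hzc
          have ev1 := mem_J3.mp hmem2 ⟨(u,u,v), le_rfl, huv.le⟩ hsmalluv
          have ev2 := mem_J3.mp hmem2 ⟨(p,p,q), le_rfl, hpq.le⟩ (ell_cover_lt hpq hpair')
          rw [hΦzc] at ev1 ev2
          simp only [Pi.sub_apply, Pi.smul_apply, smul_eq_mul] at ev1 ev2
          rw [(hwvals u v huv).1, if_pos ⟨rfl, rfl⟩, hεuv.1, mul_one] at ev1
          rw [(hwvals p q hpq).1, if_neg hsame, h1, mul_one] at ev2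
          exact one_ne_zero ((sub_eq_zero.mp ev1).trans (sub_eq_zero.mp ev2).symm)
      rcases hsh with rfl | rfl
      · simp only [Pi.sub_apply]
        rw [hε0,
          show e3 R (⟨(u, u, v), le_rfl, huv.le⟩ : Flag3 Q) ⟨(p,p,q), le_rfl, hpq.le⟩ = 0
            from if_neg (fun hc => hsame ⟨(flag_ext.mp hc).1, (flag_ext.mp hc).2.2⟩),
          show e3 R (⟨(u, v, v), huv.le, le_rfl⟩ : Flag3 Q) ⟨(p,p,q), le_rfl, hpq.le⟩ = 0
            from if_neg (fun hc => huv.ne (((flag_ext.mp hc).1.symm.trans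
              (flag_ext.mp hc).2.1))), sub_zero, sub_zero]
      · simp only [Pi.sub_apply]
        have hsym' := (hcover p q hpq hpair').1
        rw [← hsym', hε0,
          show e3 R (⟨(u, u, v), le_rfl, huv.le⟩ : Flag3 Q) ⟨(p,q,q), hpq.le, le_rfl⟩ = 0
            from if_neg (fun hc => hpq.ne ((flag_ext.mp hc).2.1.trans
              (flag_ext.mp hc).1.symm).symm),
          show e3 R (⟨(u, v, v), huv.le, le_rfl⟩ : Flag3 Q) ⟨(p,q,q), hpq.le, le_rfl⟩ = 0
            from if_neg (fun hc => hsame ⟨(flag_ext.mp hc).1, (flag_ext.mp hc).2.2⟩),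
          sub_zero, sub_zero]
end

section
/- Let P and Q be finite posets, R an indecomposable commutative unital ring, Φ : I^3(P,R) → I^3(Q,R) an isomorphism, and φ : P → Q the induced bijection (i.e. Φ(e_x) − e_{φ(x)} ∈ J^3_1(Q,R) for all x ∈ P). Then for all x < y in P with l(x,y) = 1 one has φ(x) < φ(y) with l(φ(x),φ(y)) = 1, and Φ(e_{xxy} + e_{xyy}) = e_{φ(x)φ(x)φ(y)} + e_{φ(x)φ(y)φ(y)} + σ for some σ ∈ J^3_2(Q,R). -/
set_option linter.unusedSectionVars false
set_option maxHeartbeats 1000000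

lemma le_sub_one_of_add_one_le {x : ℕ∞} {n : ℕ} (H : ((n:ℕ∞) + 1) ≤ x) : (n:ℕ∞) ≤ x - 1 := by
  cases x using ENat.recTopCoe with
  | top => simp
  | coe m =>
    have h1 : n + 1 ≤ m := by exact_mod_cast H
    have h2 : ((m:ℕ∞)) - 1 = ((m - 1 : ℕ) : ℕ∞) := by
      rw [← Nat.cast_one (R := ℕ∞), ← ENat.coe_sub]
    rw [h2]
    exact_mod_cast by omega


section EllLemmas
variable {P : Type*} [PartialOrder P]

lemma chainHeight_singleton (a : P) : ({a} : Set P).chainHeight (· < ·) = 1 := by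
  rw [← Set.encard_eq_chainHeight_of_isChain _ (Set.subsingleton_singleton.isChain)]
  simp

lemma chainHeight_pair {a c : P} (h : a < c) : ({a, c} : Set P).chainHeight (· < ·) = 2 := by
  rw [← Set.encard_eq_chainHeight_of_isChain _ (IsChain.pair h), Set.encard_pair h.ne]

lemma ell_self (a : P) : ell a a = 0 := by
  unfold ell
  rw [Set.Icc_self, chainHeight_singleton]
  decide

lemma two_le_chainHeight {a c : P} (h : a < c) : 2 ≤ (Set.Icc a c).chainHeight (· < ·) := by
  have : ((2:ℕ) : ℕ∞) ≤ (Set.Icc a c).chainHeight (· < ·) := by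
    refine le_trans (le_of_eq ?_)
      (Set.encard_le_chainHeight_of_isChain (r := (· < ·)) _ {a, c} ?_ (IsChain.pair h))
    · rw [Set.encard_pair h.ne]; norm_num
    · intro i hi; simp at hi; rcases hi with rfl | rfl <;>
      simp [Set.mem_Icc, h.le]
  exact_mod_cast this

lemma one_le_ell {a c : P} (h : a < c) : 1 ≤ ell a c := by
  unfold ell
  have := le_sub_one_of_add_one_le (x := (Set.Icc a c).chainHeight (· < ·)) (n := 1)
    (by exact_mod_cast two_le_chainHeight h)
  exact_mod_cast this

lemma two_le_ell {a c : P} {m : P} (h1 : a < m) (h2 : m < c) : 2 ≤ ell a c := by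
  have h3 : ((3:ℕ) : ℕ∞) ≤ (Set.Icc a c).chainHeight (· < ·) := by
    refine le_trans (le_of_eq ?_)
      (Set.encard_le_chainHeight_of_isChain (r := (· < ·)) _ {a, m, c} ?_
        ((IsChain.pair h2).insert (fun b hb _ => Or.inl (by
          simp at hb; rcases hb with rfl | rfl
          · exact h1
          · exact h1.trans h2))))
    · rw [Set.encard_insert_of_notMem (by simp [h1.ne, (h1.trans h2).ne]), Set.encard_pair h2.ne]
      norm_num
    intro i hi; simp at hi
    rcases hi with rfl | rfl | rfl <;> simp [Set.mem_Icc, h1.le, h2.le, (h1.trans h2).le]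
  unfold ell
  have := le_sub_one_of_add_one_le (x := (Set.Icc a c).chainHeight (· < ·)) (n := 2)
    (by exact_mod_cast h3)
  exact_mod_cast this

lemma ell_eq_one_s10 {a c : P} (h : a < c) (hnm : ∀ m, a < m → m < c → False) : ell a c = 1 := by
  have hIcc : Set.Icc a c = {a, c} := by
    ext m
    simp only [Set.mem_Icc, Set.mem_insert_iff, Set.mem_singleton_iff]
    constructor
    · rintro ⟨h1, h2⟩
      rcases eq_or_lt_of_le h1 with rfl | h1'
      · exact Or.inl rfl
      rcases eq_or_lt_of_le h2 with rfl | h2'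
      · exact Or.inr rfl
      exact absurd (hnm m h1' h2') (by simp)
    · rintro (rfl | rfl) <;> simp [h.le]
  unfold ell
  rw [hIcc, chainHeight_pair h]
  decide

lemma eq_of_ell_lt_one {a c : P} (hle : a ≤ c) (h : ell a c < 1) : a = c := by
  by_contra hne
  exact absurd h (not_lt.mpr (one_le_ell (lt_of_le_of_ne hle hne)))

lemma no_middle_of_ell_lt_two {a c : P} (h : ell a c < 2) :
    ∀ m, a < m → m < c → False := by
  intro m h1 h2
  exact absurd h (not_lt.mpr (two_le_ell h1 h2))

lemma ell_lt_one_self (a : P) : ell a a < 1 := by rw [ell_self]; decide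

lemma ell_mono_left {a u c : P} (h : a ≤ u) : ell u c ≤ ell a c := by
  unfold ell
  exact tsub_le_tsub_right (Set.chainHeight_mono _ _ _ (Set.Icc_subset_Icc_left h)) 1

lemma ell_mono_right {a v c : P} (h : v ≤ c) : ell a v ≤ ell a c := by
  unfold ell
  exact tsub_le_tsub_right (Set.chainHeight_mono _ _ _ (Set.Icc_subset_Icc_right h)) 1

end EllLemmas


section Comp
variable {P R : Type*} [PartialOrder P] [LocallyFiniteOrder P] [CommRing R] [DecidableEq P]

open Classical in
noncomputable def ext3 (f : Flag3 P → R) : P × P × P → R := fun p =>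
  if h : p.1 ≤ p.2.1 ∧ p.2.1 ≤ p.2.2 then f ⟨p, h⟩ else 0

lemma ext3_eq (f : Flag3 P → R) {a b c : P} (h1 : a ≤ b) (h2 : b ≤ c) :
    ext3 f (a, b, c) = f ⟨(a, b, c), h1, h2⟩ := dif_pos ⟨h1, h2⟩

lemma mul3_eval_s10 (f g : Flag3 P → R) (a b c : P) (hab : a ≤ b) (hbc : b ≤ c) :
    mul3 P R f g ⟨(a, b, c), hab, hbc⟩ =
      ∑ u ∈ Finset.Icc a b, ∑ v ∈ Finset.Icc b c, ext3 f (a, u, v) * ext3 g (u, v, c) := by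
  rw [mul3]
  rw [← Finset.sum_product' (s := Finset.Icc a b) (t := Finset.Icc b c)
    (f := fun u v => ext3 f (a, u, v) * ext3 g (u, v, c))]
  rw [← Finset.sum_attach ((Finset.Icc a b) ×ˢ (Finset.Icc b c))
    (fun p => ext3 f (a, p.1, p.2) * ext3 g (p.1, p.2, c))]
  refine Finset.sum_congr rfl fun p _ => ?_
  obtain ⟨h1, h2⟩ := Finset.mem_product.mp p.2
  rw [Finset.mem_Icc] at h1 h2
  rw [ext3_eq f h1.1 (h1.2.trans h2.1), ext3_eq g (h1.2.trans h2.1) h2.2]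

lemma e3_apply_mk (t0 : Flag3 P) (p : P × P × P) (h : p.1 ≤ p.2.1 ∧ p.2.1 ≤ p.2.2) :
    e3 R t0 ⟨p, h⟩ = if p = t0.1 then 1 else 0 := by
  simp only [e3, Subtype.ext_iff]

lemma ext3_e3 (t0 : Flag3 P) (p : P × P × P) :
    ext3 (e3 R t0) p = if p = t0.1 then 1 else 0 := by
  by_cases hp : p.1 ≤ p.2.1 ∧ p.2.1 ≤ p.2.2
  · rw [ext3, dif_pos hp, e3_apply_mk]
  · rw [ext3, dif_neg hp, if_neg]
    intro h
    exact hp (h ▸ t0.2)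

lemma mul3_diag (f g : Flag3 P → R) (q : P) :
    mul3 P R f g ⟨(q, q, q), le_rfl, le_rfl⟩ =
      f ⟨(q, q, q), le_rfl, le_rfl⟩ * g ⟨(q, q, q), le_rfl, le_rfl⟩ := by
  rw [mul3_eval_s10 f g q q q le_rfl le_rfl, Finset.Icc_self, Finset.sum_singleton, Finset.sum_singleton,
    ext3_eq f le_rfl le_rfl, ext3_eq g le_rfl le_rfl]

lemma mul3_cover_left (f g : Flag3 P → R) {a c : P} (hac : a ≤ c) (hne : a ≠ c)
    (hIcc : Finset.Icc a c = {a, c}) :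
    mul3 P R f g ⟨(a, a, c), le_rfl, hac⟩ =
      f ⟨(a, a, a), le_rfl, le_rfl⟩ * g ⟨(a, a, c), le_rfl, hac⟩ +
      f ⟨(a, a, c), le_rfl, hac⟩ * g ⟨(a, c, c), hac, le_rfl⟩ := by
  rw [mul3_eval_s10 f g a a c le_rfl hac, Finset.Icc_self, Finset.sum_singleton, hIcc,
    Finset.sum_insert (by simp [hne]), Finset.sum_singleton,
    ext3_eq f le_rfl le_rfl, ext3_eq g le_rfl hac, ext3_eq f le_rfl hac, ext3_eq g hac le_rfl]

lemma mul3_cover_right (f g : Flag3 P → R) {a c : P} (hac : a ≤ c) (hne : a ≠ c)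
    (hIcc : Finset.Icc a c = {a, c}) :
    mul3 P R f g ⟨(a, c, c), hac, le_rfl⟩ =
      f ⟨(a, a, c), le_rfl, hac⟩ * g ⟨(a, c, c), hac, le_rfl⟩ +
      f ⟨(a, c, c), hac, le_rfl⟩ * g ⟨(c, c, c), le_rfl, le_rfl⟩ := by
  rw [mul3_eval_s10 f g a c c hac le_rfl, Finset.Icc_self, hIcc,
    Finset.sum_insert (by simp [hne])]
  simp only [Finset.sum_singleton]
  rw [ext3_eq f le_rfl hac, ext3_eq g hac le_rfl, ext3_eq f hac le_rfl, ext3_eq g le_rfl le_rfl]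

open Classical in
lemma mul3_e3_e3 (s t u : Flag3 P) :
    mul3 P R (e3 R s) (e3 R t) u =
      if u.1.1 = s.1.1 ∧ u.1.2.2 = t.1.2.2 ∧ t.1.1 = s.1.2.1 ∧ t.1.2.1 = s.1.2.2
        ∧ s.1.2.1 ≤ u.1.2.1 ∧ u.1.2.1 ≤ s.1.2.2 then 1 else 0 := by
  classical
  obtain ⟨⟨a, b, c⟩, hab, hbc⟩ := u
  rw [mul3_eval_s10 _ _ a b c hab hbc]
  simp only
  by_cases H : a = s.1.1 ∧ c = t.1.2.2 ∧ t.1.1 = s.1.2.1 ∧ t.1.2.1 = s.1.2.2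
    ∧ s.1.2.1 ≤ b ∧ b ≤ s.1.2.2
  · obtain ⟨H1, H2, H3, H4, H5, H6⟩ := H
    rw [if_pos ⟨H1, H2, H3, H4, H5, H6⟩]
    rw [Finset.sum_eq_single_of_mem s.1.2.1
      (Finset.mem_Icc.mpr ⟨H1 ▸ s.2.1, H5⟩)]
    · rw [Finset.sum_eq_single_of_mem s.1.2.2
        (Finset.mem_Icc.mpr ⟨H6, H2 ▸ H4 ▸ t.2.2⟩)]
      · rw [ext3_e3, ext3_e3, if_pos (by rw [H1]), if_pos (by rw [← H3, ← H4, H2]), mul_one]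
      · intro v hv hvne
        rw [ext3_e3, if_neg, zero_mul]
        intro hEq
        exact hvne (congrArg (fun p => p.2.2) hEq)
    · intro u' hu' hune
      refine Finset.sum_eq_zero fun v hv => ?_
      rw [ext3_e3, if_neg, zero_mul]
      intro hEq
      exact hune (congrArg (fun p => p.2.1) hEq)
  · rw [if_neg H]
    refine Finset.sum_eq_zero fun u' hu' => Finset.sum_eq_zero fun v hv => ?_
    rw [ext3_e3, ext3_e3]
    rw [Finset.mem_Icc] at hu' hv
    by_cases h1 : (a, u', v) = s.1
    · by_cases h2 : (u', v, c) = t.1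
      · exfalso
        apply H
        have e1 : a = s.1.1 := congrArg (fun p => p.1) h1
        have e2 : u' = s.1.2.1 := congrArg (fun p => p.2.1) h1
        have e3' : v = s.1.2.2 := congrArg (fun p => p.2.2) h1
        have e4 : u' = t.1.1 := congrArg (fun p => p.1) h2
        have e5 : v = t.1.2.1 := congrArg (fun p => p.2.1) h2
        have e6 : c = t.1.2.2 := congrArg (fun p => p.2.2) h2
        exact ⟨e1, e6, e4 ▸ e2, e5 ▸ e3', e2 ▸ hu'.2, e3' ▸ hv.1⟩
      · rw [if_neg h2, mul_zero]
    · rw [if_neg h1, zero_mul]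
end Comp


section Algebra
variable {P R : Type*} [PartialOrder P] [LocallyFiniteOrder P] [CommRing R] [DecidableEq P]

lemma mul3_add_right (f g h : Flag3 P → R) :
    mul3 P R f (g + h) = mul3 P R f g + mul3 P R f h := by
  funext t
  simp only [mul3, Pi.add_apply, mul_add, Finset.sum_add_distrib]

lemma mul3_add_left (f g h : Flag3 P → R) :
    mul3 P R (f + g) h = mul3 P R f h + mul3 P R g h := by
  funext t
  simp only [mul3, Pi.add_apply, add_mul, Finset.sum_add_distrib]

lemma e3_apply (t0 u : Flag3 P) : e3 R t0 u = if u.1 = t0.1 then 1 else 0 := by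
  simp [e3, Subtype.ext_iff]

lemma mul3_e3_zero (s t : Flag3 P) (h : ¬(t.1.1 = s.1.2.1 ∧ t.1.2.1 = s.1.2.2)) :
    mul3 P R (e3 R s) (e3 R t) = 0 := by
  funext u
  rw [mul3_e3_e3, if_neg, Pi.zero_apply]
  rintro ⟨-, -, h3, h4, -, -⟩
  exact h ⟨h3, h4⟩

/-- Membership of a nondiagonal `e3` in `J3 _ _ 1`. -/
lemma e3_mem_J1 (s : Flag3 P) (h : s.1.1 ≠ s.1.2.2) : e3 R s ∈ J3 P R 1 := by
  intro t ht
  rw [e3_apply, if_neg]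
  intro hEq
  apply h
  have h13 : t.1.1 = t.1.2.2 := eq_of_ell_lt_one (t.2.1.trans t.2.2) (by exact_mod_cast ht)
  rw [← hEq]
  exact h13

lemma J3_diag {k : ℕ} (hk : 1 ≤ k) {f : Flag3 P → R} (hf : f ∈ J3 P R k) (q : P) :
    f ⟨(q, q, q), le_rfl, le_rfl⟩ = 0 := by
  apply hf
  show ell q q < (k : ℕ∞)
  rw [ell_self]
  exact_mod_cast Nat.pos_of_ne_zero (by omega)

lemma mul3_right_mem_J3 {k : ℕ} {f : Flag3 P → R} (hf : f ∈ J3 P R k) (g : Flag3 P → R) :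
    mul3 P R g f ∈ J3 P R k := by
  rintro ⟨⟨a, b, c⟩, hab, hbc⟩ ht
  rw [mul3_eval_s10 _ _ a b c hab hbc]
  refine Finset.sum_eq_zero fun u hu => Finset.sum_eq_zero fun v hv => ?_
  rw [Finset.mem_Icc] at hu hv
  have huv : u ≤ v := hu.2.trans hv.1
  rw [ext3_eq f huv hv.2, hf ⟨(u, v, c), huv, hv.2⟩ (lt_of_le_of_lt (ell_mono_left hu.1) ht),
    mul_zero]

lemma mul3_left_mem_J3 {k : ℕ} {f : Flag3 P → R} (hf : f ∈ J3 P R k) (g : Flag3 P → R) :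
    mul3 P R f g ∈ J3 P R k := by
  rintro ⟨⟨a, b, c⟩, hab, hbc⟩ ht
  rw [mul3_eval_s10 _ _ a b c hab hbc]
  refine Finset.sum_eq_zero fun u hu => Finset.sum_eq_zero fun v hv => ?_
  rw [Finset.mem_Icc] at hu hv
  have huv : u ≤ v := hu.2.trans hv.1
  rw [ext3_eq f hu.1 huv, hf ⟨(a, u, v), hu.1, huv⟩ (lt_of_le_of_lt (ell_mono_right hv.2) ht),
    zero_mul]

lemma Icc_pair {a c : P} (h : a < c) (hnm : ∀ m, a < m → m < c → False) :
    Finset.Icc a c = {a, c} := by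
  ext m
  simp only [Finset.mem_Icc, Finset.mem_insert, Finset.mem_singleton]
  constructor
  · rintro ⟨h1, h2⟩
    rcases eq_or_lt_of_le h1 with rfl | h1'
    · exact Or.inl rfl
    rcases eq_or_lt_of_le h2 with rfl | h2'
    · exact Or.inr rfl
    exact absurd (hnm m h1' h2') (by simp)
  · rintro (rfl | rfl) <;> simp [h.le]

variable (P R) in
/-- The submodule of functions vanishing on the diagonal with equal values on the two
flags of each covering pair. -/
def Ksub : Submodule R (Flag3 P → R) where
  carrier := {f | (∀ q : P, f ⟨(q, q, q), le_rfl, le_rfl⟩ = 0) ∧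
    ∀ a c : P, ∀ h : a < c, (∀ m, a < m → m < c → False) →
      f ⟨(a, a, c), le_rfl, h.le⟩ = f ⟨(a, c, c), h.le, le_rfl⟩}
  add_mem' := by
    rintro f g ⟨hf1, hf2⟩ ⟨hg1, hg2⟩
    refine ⟨fun q => ?_, fun a c h hnm => ?_⟩
    · simp [hf1 q, hg1 q]
    · simp [hf2 a c h hnm, hg2 a c h hnm]
  zero_mem' := ⟨fun _ => rfl, fun _ _ _ _ => rfl⟩
  smul_mem' := by
    rintro r f ⟨hf1, hf2⟩
    refine ⟨fun q => ?_, fun a c h hnm => ?_⟩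
    · simp [hf1 q]
    · simp [hf2 a c h hnm]

lemma mul3_mem_Ksub {f g : Flag3 P → R} (hf : f ∈ J3 P R 1) (hg : g ∈ J3 P R 1) :
    mul3 P R f g ∈ Ksub P R := by
  refine ⟨fun q => ?_, fun a c h hnm => ?_⟩
  · rw [mul3_diag, J3_diag le_rfl hf q, zero_mul]
  · rw [mul3_cover_left f g h.le h.ne (Icc_pair h hnm),
      mul3_cover_right f g h.le h.ne (Icc_pair h hnm),
      J3_diag le_rfl hf a, J3_diag le_rfl hg c, zero_mul, mul_zero, zero_add, add_zero]

lemma commSub_le_Ksub {U V : Submodule R (Flag3 P → R)}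
    (hU : U ≤ J3 P R 1) (hV : V ≤ J3 P R 1) : commSub P R U V ≤ Ksub P R := by
  rw [commSub, Submodule.span_le]
  rintro h ⟨f, hfU, g, hgV, rfl⟩
  exact sub_mem (mul3_mem_Ksub (hU hfU) (hV hgV)) (mul3_mem_Ksub (hV hgV) (hU hfU))

lemma commSub_top_le_J1 : commSub P R ⊤ ⊤ ≤ J3 P R 1 := by
  rw [commSub, Submodule.span_le]
  rintro h ⟨f, -, g, -, rfl⟩
  rintro ⟨⟨a, b, c⟩, hab, hbc⟩ ht
  have hac : a = c := eq_of_ell_lt_one (hab.trans hbc) (by exact_mod_cast ht)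
  subst hac
  have hba : b = a := le_antisymm hbc hab
  subst hba
  show mul3 P R f g ⟨(b,b,b), hab, hbc⟩ - mul3 P R g f ⟨(b,b,b), hab, hbc⟩ = 0
  rw [show (⟨(b,b,b), hab, hbc⟩ : Flag3 P) = ⟨(b,b,b), le_rfl, le_rfl⟩ from rfl,
    mul3_diag, mul3_diag, mul_comm, sub_self]

lemma e3_eq_comm (a b c : P) (hab : a ≤ b) (hbc : b ≤ c) (hne : a ≠ c) :
    e3 R (⟨(a, b, c), hab, hbc⟩ : Flag3 P) =
      mul3 P R (e3 R ⟨(a, b, b), hab, le_rfl⟩) (e3 R ⟨(b, b, c), le_rfl, hbc⟩) -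
      mul3 P R (e3 R ⟨(b, b, c), le_rfl, hbc⟩) (e3 R ⟨(a, b, b), hab, le_rfl⟩) := by
  have h0 : mul3 P R (e3 R ⟨(b, b, c), le_rfl, hbc⟩) (e3 R ⟨(a, b, b), hab, le_rfl⟩) = 0 :=
    mul3_e3_zero _ _ (by
      rintro ⟨h1, h2⟩
      exact hne ((show a = b from h1).trans (show b = c from h2)))
  rw [h0]
  funext u
  rw [Pi.sub_apply, Pi.zero_apply, sub_zero, mul3_e3_e3, e3_apply]
  obtain ⟨⟨u1, u2, u3⟩, h12, h23⟩ := u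
  simp only
  by_cases hu : (u1, u2, u3) = ((a, b, c) : P × P × P)
  · rw [if_pos hu, if_pos]
    obtain ⟨e1, e2, e3'⟩ : u1 = a ∧ u2 = b ∧ u3 = c := by
      simpa [Prod.ext_iff] using hu
    exact ⟨e1, e3', rfl, rfl, le_of_eq e2.symm, le_of_eq e2⟩
  · rw [if_neg hu, if_neg]
    rintro ⟨e1, e2, -, -, l1, l2⟩
    exact hu (by rw [e1, e2, le_antisymm l2 l1])

end Algebra


section Algebra2
variable {P R : Type*} [PartialOrder P] [LocallyFiniteOrder P] [CommRing R] [DecidableEq P]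

lemma mem_J3_iff {k : ℕ} {f : Flag3 P → R} :
    f ∈ J3 P R k ↔ ∀ t : Flag3 P, ell t.1.1 t.1.2.2 < (k : ℕ∞) → f t = 0 := Iff.rfl

lemma mul3_ez_e3_left {q : P} (t : Flag3 P) (h1 : t.1.1 = q) (h2 : t.1.2.1 = q) :
    mul3 P R (e3 R ⟨(q, q, q), le_rfl, le_rfl⟩) (e3 R t) = e3 R t := by
  obtain ⟨⟨t1, t2, t3⟩, h12, h23⟩ := t
  simp only at h1 h2
  funext u
  obtain ⟨⟨u1, u2, u3⟩, g12, g23⟩ := u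
  rw [mul3_e3_e3, e3_apply]
  simp only
  by_cases hu : ((u1, u2, u3) : P × P × P) = (t1, t2, t3)
  · obtain ⟨e1, e2, e3'⟩ : u1 = t1 ∧ u2 = t2 ∧ u3 = t3 := by simpa [Prod.ext_iff] using hu
    rw [if_pos hu, if_pos]
    exact ⟨e1.trans h1, e3', h1, h2, le_of_eq (h2.symm.trans e2.symm),
      le_of_eq (e2.trans h2)⟩
  · rw [if_neg hu, if_neg]
    rintro ⟨c1, c2, -, -, l1, l2⟩
    apply hu
    have hmid : u2 = q := le_antisymm l2 l1
    simp [Prod.ext_iff]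
    exact ⟨c1.trans h1.symm, hmid.trans h2.symm, c2⟩

lemma triple_eq_iff {A : Type*} {p q r p' q' r' : A} :
    ((p, q, r) : A × A × A) = (p', q', r') ↔ p = p' ∧ q = q' ∧ r = r' := by
  simp [Prod.ext_iff]

lemma comm_left (a m c : P) (ham : a < m) (hmc : m ≤ c)
    (hnm : ∀ p, a < p → p < m → False) :
    e3 R (⟨(a, a, c), le_rfl, ham.le.trans hmc⟩ : Flag3 P) =
      mul3 P R (e3 R ⟨(a, a, m), le_rfl, ham.le⟩) (e3 R ⟨(a, m, c), ham.le, hmc⟩) -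
      mul3 P R (e3 R ⟨(a, m, c), ham.le, hmc⟩) (e3 R ⟨(a, a, m), le_rfl, ham.le⟩) -
      e3 R ⟨(a, m, c), ham.le, hmc⟩ := by
  have h0 : mul3 P R (e3 R ⟨(a, m, c), ham.le, hmc⟩) (e3 R ⟨(a, a, m), le_rfl, ham.le⟩) = 0 :=
    mul3_e3_zero _ _ (by rintro ⟨h1, -⟩; exact ham.ne (show a = m from h1))
  rw [h0]
  funext u
  obtain ⟨⟨u1, u2, u3⟩, g12, g23⟩ := u
  rw [Pi.sub_apply, Pi.sub_apply, Pi.zero_apply, sub_zero, mul3_e3_e3, e3_apply, e3_apply]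
  simp only [triple_eq_iff]
  split_ifs with hL hC hM hM2 hC2 hM3 hM4
  · exact absurd (hL.2.1.symm.trans hM.2.1) ham.ne
  · norm_num
  · exact absurd (hL.2.1.symm.trans hM2.2.1) ham.ne
  · exact absurd ⟨hL.1, hL.2.2, rfl, rfl, hL.2.1.ge, hL.2.1.le.trans ham.le⟩ hC
  · norm_num
  · exfalso
    obtain ⟨c1, c2, -, -, l1, l2⟩ := hC2
    by_cases e2 : u2 = a
    · exact hL ⟨c1, e2, c2⟩
    · by_cases e2' : u2 = m
      · exact hM3 ⟨c1, e2', c2⟩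
      · exact hnm u2 (lt_of_le_of_ne l1 (Ne.symm e2)) (lt_of_le_of_ne l2 e2')
  · exact absurd ⟨hM4.1, hM4.2.2, rfl, rfl, ham.le.trans hM4.2.1.ge, hM4.2.1.le⟩ hC2
  · norm_num

lemma comm_right (a m c : P) (ham : a < m) (hmc : m < c)
    (hnm : ∀ p, m < p → p < c → False) :
    e3 R (⟨(a, c, c), (ham.trans hmc).le, le_rfl⟩ : Flag3 P) =
      mul3 P R (e3 R ⟨(a, m, c), ham.le, hmc.le⟩) (e3 R ⟨(m, c, c), hmc.le, le_rfl⟩) -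
      mul3 P R (e3 R ⟨(m, c, c), hmc.le, le_rfl⟩) (e3 R ⟨(a, m, c), ham.le, hmc.le⟩) -
      e3 R ⟨(a, m, c), ham.le, hmc.le⟩ := by
  have h0 : mul3 P R (e3 R ⟨(m, c, c), hmc.le, le_rfl⟩) (e3 R ⟨(a, m, c), ham.le, hmc.le⟩) = 0 :=
    mul3_e3_zero _ _ (by rintro ⟨h1, -⟩; exact (ham.trans hmc).ne (show a = c from h1))
  rw [h0]
  funext u
  obtain ⟨⟨u1, u2, u3⟩, g12, g23⟩ := u
  rw [Pi.sub_apply, Pi.sub_apply, Pi.zero_apply, sub_zero, mul3_e3_e3, e3_apply, e3_apply]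
  simp only [triple_eq_iff]
  split_ifs with hL hC hM hM2 hC2 hM3 hM4
  · exact absurd (hM.2.1.symm.trans hL.2.1) hmc.ne
  · norm_num
  · exact absurd (hM2.2.1.symm.trans hL.2.1) hmc.ne
  · exact absurd ⟨hL.1, hL.2.2, rfl, rfl, hmc.le.trans hL.2.1.ge, hL.2.1.le⟩ hC
  · norm_num
  · exfalso
    obtain ⟨c1, c2, -, -, l1, l2⟩ := hC2
    by_cases e2 : u2 = c
    · exact hL ⟨c1, e2, c2⟩
    · by_cases e2' : u2 = m
      · exact hM3 ⟨c1, e2', c2⟩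
      · exact hnm u2 (lt_of_le_of_ne l1 (Ne.symm e2')) (lt_of_le_of_ne l2 e2)
  · exact absurd ⟨hM4.1, hM4.2.2, rfl, rfl, hM4.2.1.ge, hM4.2.1.le.trans hmc.le⟩ hC2
  · norm_num

lemma exists_cover_between [Fintype P] {a c m0 : P} (h1 : a < m0) (h2 : m0 < c) :
    ∃ m, a < m ∧ m < c ∧ ∀ p, a < p → p < m → False := by
  classical
  obtain ⟨m, hmS, hmin⟩ := Finset.exists_minimal
    (s := Finset.univ.filter (fun t => a < t ∧ t < c)) ⟨m0, by simp [h1, h2]⟩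
  simp only [Finset.mem_filter, Finset.mem_univ, true_and] at hmS
  exact ⟨m, hmS.1, hmS.2, fun p hp1 hp2 =>
    hp2.not_ge (hmin (by simp [hp1, hp2.trans hmS.2]) hp2.le)⟩

lemma exists_cover_between' [Fintype P] {a c m0 : P} (h1 : a < m0) (h2 : m0 < c) :
    ∃ m, a < m ∧ m < c ∧ ∀ p, m < p → p < c → False := by
  classical
  obtain ⟨m, hmS, hmax⟩ := Finset.exists_maximal
    (s := Finset.univ.filter (fun t => a < t ∧ t < c)) ⟨m0, by simp [h1, h2]⟩
  simp only [Finset.mem_filter, Finset.mem_univ, true_and] at hmS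
  exact ⟨m, hmS.1, hmS.2, fun p hp1 hp2 =>
    hp1.not_ge (hmax (by simp [hmS.1.trans hp1, hp2]) hp1.le)⟩

lemma eq_sum_e3 [Fintype (Flag3 P)] (f : Flag3 P → R) :
    f = ∑ t : Flag3 P, f t • e3 R t := by
  funext u
  rw [Finset.sum_apply, Finset.sum_eq_single u (fun t _ ht => by simp [e3, Ne.symm ht])
    (fun h => absurd (Finset.mem_univ u) h)]
  simp [e3]

lemma J1_le_commSub_top [Fintype (Flag3 P)] : J3 P R 1 ≤ commSub P R ⊤ ⊤ := by
  intro f hf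
  have hrep := eq_sum_e3 (R := R) f
  rw [hrep]
  refine Submodule.sum_mem _ fun t _ => ?_
  by_cases hd : t.1.1 = t.1.2.2
  · have h0 : f t = 0 := hf t (by rw [hd, ell_self]; norm_num)
    rw [h0, zero_smul]
    exact zero_mem _
  · refine Submodule.smul_mem _ _ (Submodule.subset_span ?_)
    obtain ⟨⟨a, b, c⟩, hab, hbc⟩ := t
    exact ⟨e3 R ⟨(a, b, b), hab, le_rfl⟩, Submodule.mem_top,
      e3 R ⟨(b, b, c), le_rfl, hbc⟩, Submodule.mem_top, e3_eq_comm a b c hab hbc hd⟩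

lemma e3_mem_commSub_J1 [Fintype P] (t : Flag3 P) (h2 : ¬ ell t.1.1 t.1.2.2 < (2 : ℕ∞)) :
    e3 R t ∈ commSub P R (J3 P R 1) (J3 P R 1) := by
  obtain ⟨⟨a, b, c⟩, hab, hbc⟩ := t
  simp only at h2
  have hac : a ≤ c := hab.trans hbc
  have hlt : a < c := lt_of_le_of_ne hac (by rintro rfl; exact h2 (by rw [ell_self]; norm_num))
  have hmid : ∃ m, a < m ∧ m < c := by
    by_contra hno
    push_neg at hno
    exact h2 (by rw [ell_eq_one_s10 hlt (fun m hm1 hm2 => hno m hm1 hm2)]; norm_num)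
  obtain ⟨m0, hm01, hm02⟩ := hmid
  by_cases hb1 : b = a
  · subst hb1
    obtain ⟨m, k1, k2, k3⟩ := exists_cover_between hm01 hm02
    rw [show (⟨(b, b, c), hab, hbc⟩ : Flag3 P) = ⟨(b, b, c), le_rfl, k1.le.trans k2.le⟩ from rfl,
      comm_left b m c k1 k2.le k3]
    refine sub_mem (Submodule.subset_span
      ⟨e3 R ⟨(b, b, m), le_rfl, k1.le⟩, e3_mem_J1 _ k1.ne,
       e3 R ⟨(b, m, c), k1.le, k2.le⟩, e3_mem_J1 _ hlt.ne, rfl⟩) ?_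
    rw [e3_eq_comm b m c k1.le k2.le hlt.ne]
    exact Submodule.subset_span
      ⟨e3 R ⟨(b, m, m), k1.le, le_rfl⟩, e3_mem_J1 _ k1.ne,
       e3 R ⟨(m, m, c), le_rfl, k2.le⟩, e3_mem_J1 _ k2.ne, rfl⟩
  · by_cases hb2 : b = c
    · subst hb2
      obtain ⟨m, k1, k2, k3⟩ := exists_cover_between' hm01 hm02
      rw [show (⟨(a, b, b), hab, hbc⟩ : Flag3 P) = ⟨(a, b, b), (k1.trans k2).le, le_rfl⟩ from rfl,
        comm_right a m b k1 k2 k3]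
      refine sub_mem (Submodule.subset_span
        ⟨e3 R ⟨(a, m, b), k1.le, k2.le⟩, e3_mem_J1 _ hlt.ne,
         e3 R ⟨(m, b, b), k2.le, le_rfl⟩, e3_mem_J1 _ k2.ne, rfl⟩) ?_
      rw [e3_eq_comm a m b k1.le k2.le hlt.ne]
      exact Submodule.subset_span
        ⟨e3 R ⟨(a, m, m), k1.le, le_rfl⟩, e3_mem_J1 _ k1.ne,
         e3 R ⟨(m, m, b), le_rfl, k2.le⟩, e3_mem_J1 _ k2.ne, rfl⟩
    · have hab' : a < b := lt_of_le_of_ne hab (Ne.symm hb1)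
      have hbc' : b < c := lt_of_le_of_ne hbc hb2
      rw [e3_eq_comm a b c hab hbc hlt.ne]
      exact Submodule.subset_span
        ⟨e3 R ⟨(a, b, b), hab, le_rfl⟩, e3_mem_J1 _ hab'.ne,
         e3 R ⟨(b, b, c), le_rfl, hbc⟩, e3_mem_J1 _ hbc'.ne, rfl⟩

lemma J2_le_commSub_J1 [Fintype P] [Fintype (Flag3 P)] :
    J3 P R 2 ≤ commSub P R (J3 P R 1) (J3 P R 1) := by
  intro f hf
  have hrep := eq_sum_e3 (R := R) f
  rw [hrep]
  refine Submodule.sum_mem _ fun t _ => ?_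
  by_cases hd : ell t.1.1 t.1.2.2 < (2 : ℕ∞)
  · have h0 : f t = 0 := hf t (by exact_mod_cast hd)
    rw [h0, zero_smul]
    exact zero_mem _
  · exact Submodule.smul_mem _ _ (e3_mem_commSub_J1 t hd)

end Algebra2

section MapSec
variable {P Q R : Type*} [PartialOrder P] [LocallyFiniteOrder P]
  [PartialOrder Q] [LocallyFiniteOrder Q] [CommRing R]

lemma map_commSub {Φ : (Flag3 P → R) ≃ₗ[R] (Flag3 Q → R)}
    (hΦ : ∀ f g, Φ (mul3 P R f g) = mul3 Q R (Φ f) (Φ g))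
    {U V : Submodule R (Flag3 P → R)} {U' V' : Submodule R (Flag3 Q → R)}
    (hU : ∀ f ∈ U, Φ f ∈ U') (hV : ∀ g ∈ V, Φ g ∈ V')
    {h : Flag3 P → R} (hh : h ∈ commSub P R U V) : Φ h ∈ commSub Q R U' V' := by
  rw [commSub] at hh
  induction hh using Submodule.span_induction with
  | mem x hx =>
    obtain ⟨f, hf, g, hg, rfl⟩ := hx
    rw [map_sub, hΦ, hΦ]
    exact Submodule.subset_span ⟨Φ f, hU f hf, Φ g, hV g hg, rfl⟩
  | zero => rw [map_zero]; exact zero_mem _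
  | add x y hx hy ihx ihy => rw [map_add]; exact add_mem ihx ihy
  | smul r x hx ih => rw [map_smul]; exact Submodule.smul_mem _ _ ih

end MapSec

/-- With `Φ` an isomorphism `I^3(P,R) → I^3(Q,R)` and `φ : P ≃ Q` the
induced bijection, for all `x < y` with `l(x,y) = 1` one has `φ(x) < φ(y)`,
`l(φ(x),φ(y)) = 1`, and `Φ(e_{xxy} + e_{xyy}) = e_{φ(x)φ(x)φ(y)} + e_{φ(x)φ(y)φ(y)} + σ`
for some `σ ∈ J^3_2(Q,R)`. -/
theorem iso_image_of_cover_idempotent_with_bijection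
    {P Q R : Type*} [PartialOrder P] [Fintype P] [DecidableEq P] [LocallyFiniteOrder P]
    [PartialOrder Q] [Fintype Q] [DecidableEq Q] [LocallyFiniteOrder Q]
    [CommRing R] [Nontrivial R] (hR : ∀ r : R, r * r = r → r = 0 ∨ r = 1)
    (Φ : (Flag3 P → R) ≃ₗ[R] (Flag3 Q → R))
    (hΦ : ∀ f g : Flag3 P → R, Φ (mul3 P R f g) = mul3 Q R (Φ f) (Φ g))
    (φ : P ≃ Q)
    (hφ : ∀ x : P,
      Φ (e3 R (⟨(x, x, x), le_rfl, le_rfl⟩ : Flag3 P)) -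
        e3 R (⟨(φ x, φ x, φ x), le_rfl, le_rfl⟩ : Flag3 Q) ∈ J3 Q R 1) :
    ∀ x y : P, ∀ hxy : x < y, ell x y = 1 →
      ∃ h : φ x < φ y, ell (φ x) (φ y) = 1 ∧
        ∃ σ ∈ J3 Q R 2,
          Φ (e3 R (⟨(x, x, y), le_rfl, hxy.le⟩ : Flag3 P) +
              e3 R (⟨(x, y, y), hxy.le, le_rfl⟩ : Flag3 P)) =
            e3 R (⟨(φ x, φ x, φ y), le_rfl, h.le⟩ : Flag3 Q) +
              e3 R (⟨(φ x, φ y, φ y), h.le, le_rfl⟩ : Flag3 Q) + σ := by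
  intro x y hxy hl
  classical
  haveI : Fintype (Flag3 P) := Fintype.ofFinite _
  haveI : Fintype (Flag3 Q) := Fintype.ofFinite _
  have hxyne : x ≠ y := hxy.ne
  have hl2 : ell x y < (2 : ℕ∞) := by rw [hl]; norm_num
  have hnmP : ∀ m, x < m → m < y → False := no_middle_of_ell_lt_two hl2
  -- basic flags
  set fxxy : Flag3 P := ⟨(x, x, y), le_rfl, hxy.le⟩ with hfxxy_def
  set fxyy : Flag3 P := ⟨(x, y, y), hxy.le, le_rfl⟩ with hfxyy_def
  set w : Flag3 P → R := e3 R fxxy + e3 R fxyy with hw_def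
  -- multiplicativity of the inverse
  have hPsi : ∀ f g, Φ.symm (mul3 Q R f g) = mul3 P R (Φ.symm f) (Φ.symm g) := by
    intro f g
    apply Φ.injective
    rw [hΦ, LinearEquiv.apply_symm_apply, LinearEquiv.apply_symm_apply,
      LinearEquiv.apply_symm_apply]
  -- relations in P
  have hcommD : w = mul3 P R (e3 R fxxy) (e3 R fxyy) - mul3 P R (e3 R fxyy) (e3 R fxxy) :=
    ((sub_eq_iff_eq_add.mp (comm_left x y y hxy le_rfl hnmP).symm).symm : _)
  have hBA : mul3 P R (e3 R fxyy) (e3 R fxxy) = 0 :=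
    mul3_e3_zero _ _ (by rintro ⟨h1, -⟩; exact hxyne (show x = y from h1))
  have hAA : mul3 P R (e3 R fxxy) (e3 R fxxy) = 0 :=
    mul3_e3_zero _ _ (by rintro ⟨-, h2⟩; exact hxyne (show x = y from h2))
  have hBB : mul3 P R (e3 R fxyy) (e3 R fxyy) = 0 :=
    mul3_e3_zero _ _ (by rintro ⟨h1, -⟩; exact hxyne (show x = y from h1))
  have hAB : mul3 P R (e3 R fxxy) (e3 R fxyy) = w := by
    have := hcommD
    rw [hBA, sub_zero] at this
    exact this.symm
  have hww : mul3 P R w w = w := by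
    rw [hw_def, mul3_add_left, mul3_add_right, mul3_add_right, hAA, hAB, hBA, hBB]
    rw [← hw_def]
    abel
  have hLz : ∀ z : P, z ≠ x →
      mul3 P R (e3 R (⟨(z, z, z), le_rfl, le_rfl⟩ : Flag3 P)) w = 0 := by
    intro z hz
    rw [hw_def, mul3_add_right,
      mul3_e3_zero _ _ (by rintro ⟨h1, -⟩; exact hz (show x = z from h1).symm),
      mul3_e3_zero _ _ (by rintro ⟨h1, -⟩; exact hz (show x = z from h1).symm), add_zero]
  have hRz : ∀ z : P, z ≠ y →
      mul3 P R w (e3 R (⟨(z, z, z), le_rfl, le_rfl⟩ : Flag3 P)) = 0 := by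
    intro z hz
    rw [hw_def, mul3_add_left,
      mul3_e3_zero _ _ (by rintro ⟨h1, h2⟩; exact hxyne ((show z = x from h1).symm.trans
        (show z = y from h2))),
      mul3_e3_zero _ _ (by rintro ⟨h1, -⟩; exact hz (show z = y from h1)), add_zero]
  have hxw : mul3 P R (e3 R (⟨(x, x, x), le_rfl, le_rfl⟩ : Flag3 P)) w -
      mul3 P R w (e3 R (⟨(x, x, x), le_rfl, le_rfl⟩ : Flag3 P)) = e3 R fxxy := by
    rw [hRz x hxyne, sub_zero, hw_def, mul3_add_right,
      mul3_ez_e3_left fxxy rfl rfl,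
      mul3_e3_zero (⟨(x, x, x), le_rfl, le_rfl⟩ : Flag3 P) fxyy
        (by rintro ⟨-, h2⟩; exact hxy.ne' (show y = x from h2)), add_zero]
  -- images in Q
  have hA1 : Φ (e3 R fxxy) ∈ J3 Q R 1 :=
    commSub_top_le_J1 (map_commSub hΦ (fun f _ => Submodule.mem_top)
      (fun g _ => Submodule.mem_top) (J1_le_commSub_top (e3_mem_J1 fxxy hxyne)))
  have hB1 : Φ (e3 R fxyy) ∈ J3 Q R 1 :=
    commSub_top_le_J1 (map_commSub hΦ (fun f _ => Submodule.mem_top)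
      (fun g _ => Submodule.mem_top) (J1_le_commSub_top (e3_mem_J1 fxyy hxyne)))
  have hWK : Φ w ∈ Ksub Q R := by
    have h1 : Φ w = mul3 Q R (Φ (e3 R fxxy)) (Φ (e3 R fxyy)) -
        mul3 Q R (Φ (e3 R fxyy)) (Φ (e3 R fxxy)) := by
      rw [hcommD, map_sub, hΦ, hΦ]
    rw [h1]
    exact sub_mem (mul3_mem_Ksub hA1 hB1) (mul3_mem_Ksub hB1 hA1)
  obtain ⟨hWd, hWeq⟩ := hWK
  -- diag values of Φ(e_z)
  have hEzdiag : ∀ z : P, ∀ q : Q, q = φ z →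
      Φ (e3 R (⟨(z, z, z), le_rfl, le_rfl⟩ : Flag3 P)) ⟨(q, q, q), le_rfl, le_rfl⟩ = 1 := by
    intro z q hq
    have hjv := J3_diag le_rfl (hφ z) q
    rw [Pi.sub_apply, sub_eq_zero] at hjv
    rw [hjv, e3_apply, if_pos (by rw [hq])]
  -- uniqueness of the nonzero cover
  have huniq : ∀ a c : Q, ∀ hac : a < c, (∀ m, a < m → m < c → False) →
      Φ w ⟨(a, a, c), le_rfl, hac.le⟩ ≠ 0 → a = φ x ∧ c = φ y := by
    intro a c hac hnm hg
    have hIccQ := Icc_pair hac hnm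
    have hg' : Φ w ⟨(a, c, c), hac.le, le_rfl⟩ = Φ w ⟨(a, a, c), le_rfl, hac.le⟩ :=
      (hWeq a c hac hnm).symm
    constructor
    · by_contra hax
      have hzx : φ.symm a ≠ x := fun h => hax (by rw [← h]; exact (Equiv.apply_symm_apply φ a).symm)
      have h0 : mul3 Q R (Φ (e3 R (⟨(φ.symm a, φ.symm a, φ.symm a), le_rfl, le_rfl⟩ : Flag3 P)))
          (Φ w) = 0 := by
        rw [← hΦ, hLz _ hzx, map_zero]
      have e1 := congrFun h0 ⟨(a, a, c), le_rfl, hac.le⟩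
      have e2 := congrFun h0 ⟨(a, c, c), hac.le, le_rfl⟩
      rw [mul3_cover_left _ _ hac.le hac.ne hIccQ, Pi.zero_apply] at e1
      rw [mul3_cover_right _ _ hac.le hac.ne hIccQ, Pi.zero_apply] at e2
      rw [hWd c, mul_zero, add_zero, hg'] at e2
      rw [hEzdiag _ a (Equiv.apply_symm_apply φ a).symm, one_mul, hg', e2, add_zero] at e1
      exact hg e1
    · by_contra hcy
      have hzy : φ.symm c ≠ y := fun h => hcy (by rw [← h]; exact (Equiv.apply_symm_apply φ c).symm)
      have h0 : mul3 Q R (Φ w)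
          (Φ (e3 R (⟨(φ.symm c, φ.symm c, φ.symm c), le_rfl, le_rfl⟩ : Flag3 P))) = 0 := by
        rw [← hΦ, hRz _ hzy, map_zero]
      have e1 := congrFun h0 ⟨(a, a, c), le_rfl, hac.le⟩
      have e2 := congrFun h0 ⟨(a, c, c), hac.le, le_rfl⟩
      rw [mul3_cover_left _ _ hac.le hac.ne hIccQ, Pi.zero_apply] at e1
      rw [mul3_cover_right _ _ hac.le hac.ne hIccQ, Pi.zero_apply] at e2
      rw [hWd a, zero_mul, zero_add] at e1
      rw [e1, zero_add, hg', hEzdiag _ c (Equiv.apply_symm_apply φ c).symm, mul_one] at e2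
      exact hg e2
  -- the image is not in J_2
  have hWJ2 : Φ w ∉ J3 Q R 2 := by
    intro hW2
    have hxxy2 : Φ (e3 R fxxy) ∈ J3 Q R 2 := by
      have h1 : Φ (e3 R fxxy) = mul3 Q R (Φ (e3 R ⟨(x, x, x), le_rfl, le_rfl⟩)) (Φ w) -
          mul3 Q R (Φ w) (Φ (e3 R ⟨(x, x, x), le_rfl, le_rfl⟩)) := by
        conv_lhs => rw [← hxw]
        rw [map_sub, hΦ, hΦ]
      rw [h1]
      exact sub_mem (mul3_right_mem_J3 hW2 _) (mul3_left_mem_J3 hW2 _)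
    have h2 : Φ (e3 R fxxy) ∈ commSub Q R (J3 Q R 1) (J3 Q R 1) := J2_le_commSub_J1 hxxy2
    have hU : ∀ f ∈ J3 Q R 1, Φ.symm f ∈ J3 P R 1 := fun f hf =>
      commSub_top_le_J1 (map_commSub hPsi (fun _ _ => Submodule.mem_top)
        (fun _ _ => Submodule.mem_top) (J1_le_commSub_top hf))
    have h3 : e3 R fxxy ∈ commSub P R (J3 P R 1) (J3 P R 1) := by
      have := map_commSub hPsi hU hU h2
      rwa [LinearEquiv.symm_apply_apply] at this
    have h4 : e3 R fxxy ∈ Ksub P R := commSub_le_Ksub le_rfl le_rfl h3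
    have h5 := h4.2 x y hxy hnmP
    rw [e3_apply, e3_apply, if_pos rfl, if_neg] at h5
    · exact one_ne_zero h5
    · intro hEq
      exact hxy.ne' (congrArg (fun p => p.2.1) hEq)
  -- find a nonzero small flag
  rw [mem_J3_iff] at hWJ2
  push_neg at hWJ2
  obtain ⟨⟨⟨a, b, c⟩, hab, hbc⟩, hell, hWt⟩ := hWJ2
  simp only at hell hWt
  have hell2 : ell a c < (2 : ℕ∞) := by exact_mod_cast hell
  have hacne : a ≠ c := by
    rintro rfl
    have hba : b = a := le_antisymm hbc hab
    subst hba
    exact hWt (hWd b)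
  have hac : a < c := lt_of_le_of_ne (hab.trans hbc) hacne
  have hnm : ∀ m, a < m → m < c → False := no_middle_of_ell_lt_two hell2
  have hWaac : Φ w ⟨(a, a, c), le_rfl, hac.le⟩ ≠ 0 := by
    by_cases hb : b = a
    · subst hb
      exact hWt
    · have hbceq : b = c := by
        by_contra hbc2
        exact hnm b (lt_of_le_of_ne hab (Ne.symm hb)) (lt_of_le_of_ne hbc hbc2)
      subst hbceq
      intro h0
      apply hWt
      rw [show (⟨(a, b, b), hab, hbc⟩ : Flag3 Q) = ⟨(a, b, b), hab, le_rfl⟩ from rfl]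
      rw [← hWeq a b hac hnm]
      exact h0
  obtain ⟨ha0, hc0⟩ := huniq a c hac hnm hWaac
  subst ha0
  subst hc0
  refine ⟨hac, ell_eq_one_s10 hac hnm, ?_⟩
  -- the value is 1
  have hWW : mul3 Q R (Φ w) (Φ w) = Φ w := by rw [← hΦ, hww]
  have hsq := congrFun hWW ⟨(φ x, φ x, φ y), le_rfl, hac.le⟩
  rw [mul3_cover_left _ _ hac.le hac.ne (Icc_pair hac hnm), hWd, zero_mul, zero_add,
    ← hWeq _ _ hac hnm] at hsq
  have hg1 : Φ w ⟨(φ x, φ x, φ y), le_rfl, hac.le⟩ = 1 := by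
    rcases hR _ hsq with h0 | h1
    · exact absurd h0 hWaac
    · exact h1
  refine ⟨Φ w - e3 R ⟨(φ x, φ x, φ y), le_rfl, hac.le⟩ - e3 R ⟨(φ x, φ y, φ y), hac.le, le_rfl⟩,
    ?_, ?_⟩
  · -- membership of σ in J_2
    rintro ⟨⟨p, q, r⟩, hpq, hqr⟩ htl
    simp only at htl
    have htl2 : ell p r < (2 : ℕ∞) := by exact_mod_cast htl
    rw [Pi.sub_apply, Pi.sub_apply, e3_apply, e3_apply]
    by_cases hpr : p = r
    · subst hpr
      have hqp : q = p := le_antisymm hqr hpq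
      subst hqp
      rw [show (⟨(q, q, q), hpq, hqr⟩ : Flag3 Q) = ⟨(q, q, q), le_rfl, le_rfl⟩ from rfl, hWd q,
        if_neg (fun hEq => hac.ne (((congrArg (fun t : Q × Q × Q => t.1) hEq).symm.trans
          (congrArg (fun t : Q × Q × Q => t.2.2) hEq)))),
        if_neg (fun hEq => hac.ne (((congrArg (fun t : Q × Q × Q => t.1) hEq).symm.trans
          (congrArg (fun t : Q × Q × Q => t.2.1) hEq))))]
      norm_num
    · have hpr' : p < r := lt_of_le_of_ne (hpq.trans hqr) hpr
      have hnm' : ∀ m, p < m → m < r → False := no_middle_of_ell_lt_two htl2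
      have hq : q = p ∨ q = r := by
        by_contra hq2
        push_neg at hq2
        exact hnm' q (lt_of_le_of_ne hpq (Ne.symm hq2.1)) (lt_of_le_of_ne hqr hq2.2)
      rcases hq with hq1 | hq1
      · subst hq1
        rw [show (⟨(q, q, r), hpq, hqr⟩ : Flag3 Q) = ⟨(q, q, r), le_rfl, hpr'.le⟩ from rfl]
        rw [if_neg (show ¬((q, q, r) : Q × Q × Q) = ((φ x, φ y, φ y) : Q × Q × Q) from
          fun hEq => hac.ne (((congrArg (fun t : Q × Q × Q => t.1) hEq).symm.trans
          (congrArg (fun t : Q × Q × Q => t.2.1) hEq))))]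
        by_cases hmatch : q = φ x ∧ r = φ y
        · obtain ⟨hp, hr⟩ := hmatch
          subst hp
          subst hr
          rw [if_pos rfl,
            show (⟨(φ x, φ x, φ y), le_rfl, hpr'.le⟩ : Flag3 Q) =
              ⟨(φ x, φ x, φ y), le_rfl, hac.le⟩ from rfl, hg1]
          norm_num
        · have hW0 : Φ w ⟨(q, q, r), le_rfl, hpr'.le⟩ = 0 := by
            by_contra h0
            exact hmatch (huniq q r hpr' hnm' h0)
          rw [hW0, if_neg (fun hEq => hmatch ⟨congrArg (fun t : Q × Q × Q => t.1) hEq,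
            congrArg (fun t : Q × Q × Q => t.2.2) hEq⟩)]
          norm_num
      · subst hq1
        rw [show (⟨(p, q, q), hpq, hqr⟩ : Flag3 Q) = ⟨(p, q, q), hpr'.le, le_rfl⟩ from rfl]
        rw [if_neg (fun hEq => hac.ne (((congrArg (fun t : Q × Q × Q => t.2.1) hEq).symm.trans
          (congrArg (fun t : Q × Q × Q => t.2.2) hEq))))]
        have hWrr : Φ w ⟨(p, q, q), hpr'.le, le_rfl⟩ = Φ w ⟨(p, p, q), le_rfl, hpr'.le⟩ :=
          (hWeq p q hpr' hnm').symm
        by_cases hmatch : p = φ x ∧ q = φ y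
        · obtain ⟨hp, hr⟩ := hmatch
          subst hp
          subst hr
          rw [if_pos rfl, hWrr,
            show (⟨(φ x, φ x, φ y), le_rfl, hpr'.le⟩ : Flag3 Q) =
              ⟨(φ x, φ x, φ y), le_rfl, hac.le⟩ from rfl, hg1]
          norm_num
        · have hW0 : Φ w ⟨(p, p, q), le_rfl, hpr'.le⟩ = 0 := by
            by_contra h0
            exact hmatch (huniq p q hpr' hnm' h0)
          rw [hWrr, hW0, if_neg (fun hEq => hmatch ⟨congrArg (fun t : Q × Q × Q => t.1) hEq,
            congrArg (fun t : Q × Q × Q => t.2.1) hEq⟩)]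
          norm_num
  · -- the final equation
    show Φ w = _
    abel
end

section
/- Let P and Q be finite posets and R an indecomposable commutative unital ring. If there exists an isomorphism of R-algebras I^3(P,R) → I^3(Q,R), then P and Q are isomorphic as posets. -/
set_option linter.unusedSectionVars false
namespace FlagAux

variable {P R : Type*} [PartialOrder P] [DecidableEq P] [LocallyFiniteOrder P] [CommRing R]

instance instDecLe : DecidableRel ((· ≤ ·) : P → P → Prop) := fun a b =>
  decidable_of_iff (a ∈ Finset.Icc a b) (by simp [Finset.mem_Icc])

/-- Total ("unflagged") version of a function on flags. -/
def tfn (f : Flag3 P → R) (a b c : P) : R := if h : a ≤ b ∧ b ≤ c then f ⟨(a,b,c), h⟩ else 0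

lemma tfn_pos (f : Flag3 P → R) {a b c : P} (hab : a ≤ b) (hbc : b ≤ c) :
    tfn f a b c = f ⟨(a,b,c), ⟨hab,hbc⟩⟩ := dif_pos _

lemma flag_ext {f g : Flag3 P → R}
    (h : ∀ a b c (hab : a ≤ b) (hbc : b ≤ c), f ⟨(a,b,c),⟨hab,hbc⟩⟩ = g ⟨(a,b,c),⟨hab,hbc⟩⟩) :
    f = g := funext fun t => by
  obtain ⟨⟨a,b,c⟩,⟨h1,h2⟩⟩ := t
  exact h a b c h1 h2

lemma mul3_apply (f g : Flag3 P → R) {a b c : P} (hab : a ≤ b) (hbc : b ≤ c) :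
    mul3 P R f g ⟨(a,b,c), ⟨hab,hbc⟩⟩ =
      ∑ u ∈ Finset.Icc a b, ∑ v ∈ Finset.Icc b c, tfn f a u v * tfn g u v c := by
  rw [← Finset.sum_product']
  show ∑ p ∈ ((Finset.Icc a b) ×ˢ (Finset.Icc b c)).attach, _ = _
  rw [← Finset.sum_attach (((Finset.Icc a b) ×ˢ (Finset.Icc b c)))
      (fun p => tfn f a p.1 p.2 * tfn g p.1 p.2 c)]
  refine Finset.sum_congr rfl fun p _ => ?_
  have mem := p.2
  rw [Finset.mem_product, Finset.mem_Icc, Finset.mem_Icc] at mem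
  rw [tfn_pos f mem.1.1 (mem.1.2.trans mem.2.1), tfn_pos g (mem.1.2.trans mem.2.1) mem.2.2]

lemma tfn_e3 (t0 : Flag3 P) (a b c : P) :
    tfn (e3 R t0) a b c = if (a,b,c) = t0.1 then 1 else 0 := by
  unfold tfn e3
  by_cases h : a ≤ b ∧ b ≤ c
  · rw [dif_pos h]
    simp [Subtype.ext_iff]
  · rw [dif_neg h]
    have : ¬ ((a,b,c) = t0.1) := by
      intro he
      exact h (by rw [show a = t0.1.1 by rw [← he], show b = t0.1.2.1 by rw [← he],
        show c = t0.1.2.2 by rw [← he]]; exact t0.2)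
    rw [if_neg this]

/-- standard diagonal idempotent -/
def E3 (x : P) : Flag3 P → R := e3 R ⟨(x,x,x), ⟨le_refl x, le_refl x⟩⟩

lemma tfn_E3 (x : P) (a b c : P) :
    tfn (E3 (R := R) x) a b c = if a = x ∧ b = x ∧ c = x then 1 else 0 := by
  rw [E3, tfn_e3]
  simp [Prod.ext_iff]

/-- key double-sum collapse -/
lemma sum_sum_ite (s t : Finset P) (y z : P) (F : P → P → R) :
    (∑ u ∈ s, ∑ v ∈ t, if u = y ∧ v = z then F u v else 0)
      = if y ∈ s ∧ z ∈ t then F y z else 0 := by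
  have h1 : ∀ u ∈ s, (∑ v ∈ t, if u = y ∧ v = z then F u v else 0)
      = if u = y then (∑ v ∈ t, if v = z then F u v else 0) else 0 := by
    intro u _
    by_cases h : u = y
    · simp [h]
    · simp [h]
  rw [Finset.sum_congr rfl h1, Finset.sum_ite_eq' s y, Finset.sum_ite_eq' t z]
  by_cases h1 : y ∈ s <;> by_cases h2 : z ∈ t <;> simp [h1, h2]

lemma L_E3 (f : Flag3 P → R) (x : P) {a b c : P} (hab : a ≤ b) (hbc : b ≤ c) :
    tfn (mul3 P R (E3 x) f) a b c = if a = x ∧ b = x then tfn f x x c else 0 := by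
  rw [tfn_pos _ hab hbc, mul3_apply _ _ hab hbc]
  have : ∀ u ∈ Finset.Icc a b, ∀ v ∈ Finset.Icc b c,
      tfn (E3 (R := R) x) a u v * tfn f u v c
        = if u = x ∧ v = x then (if a = x then tfn f x x c else 0) else 0 := by
    intro u _ v _
    rw [tfn_E3]
    by_cases h1 : u = x <;> by_cases h2 : v = x <;> by_cases h3 : a = x <;>
      simp [h1, h2, h3]
  rw [Finset.sum_congr rfl (fun u hu => Finset.sum_congr rfl (fun v hv => this u hu v hv))]
  rw [sum_sum_ite]
  simp only [Finset.mem_Icc]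
  by_cases hm : (a ≤ x ∧ x ≤ b) ∧ b ≤ x ∧ x ≤ c
  · have hbx : b = x := le_antisymm hm.2.1 hm.1.2
    by_cases h1 : a = x
    · simp [hm, h1, hbx]
    · simp [hm, h1]
  · rw [if_neg hm, if_neg]
    rintro ⟨rfl, rfl⟩
    exact hm ⟨⟨le_refl _, hab⟩, hab, hbc⟩

lemma R_E3 (f : Flag3 P → R) (x : P) {a b c : P} (hab : a ≤ b) (hbc : b ≤ c) :
    tfn (mul3 P R f (E3 x)) a b c = if b = x ∧ c = x then tfn f a x x else 0 := by
  rw [tfn_pos _ hab hbc, mul3_apply _ _ hab hbc]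
  have : ∀ u ∈ Finset.Icc a b, ∀ v ∈ Finset.Icc b c,
      tfn f a u v * tfn (E3 (R := R) x) u v c
        = if u = x ∧ v = x then (if c = x then tfn f a x x else 0) else 0 := by
    intro u _ v _
    rw [tfn_E3]
    by_cases h1 : u = x <;> by_cases h2 : v = x <;> by_cases h3 : c = x <;>
      simp [h1, h2, h3]
  rw [Finset.sum_congr rfl (fun u hu => Finset.sum_congr rfl (fun v hv => this u hu v hv))]
  rw [sum_sum_ite]
  simp only [Finset.mem_Icc]
  by_cases hm : (a ≤ x ∧ x ≤ b) ∧ b ≤ x ∧ x ≤ c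
  · have hbx : b = x := le_antisymm hm.2.1 hm.1.2
    by_cases h1 : c = x
    · simp [hm, h1, hbx]
    · simp [hm, h1, hbx]
  · rw [if_neg hm, if_neg]
    rintro ⟨rfl, rfl⟩
    exact hm ⟨⟨hab, le_refl _⟩, le_refl _, hbc⟩

end FlagAux

namespace FlagAux

variable {P R : Type*} [PartialOrder P] [DecidableEq P] [LocallyFiniteOrder P] [CommRing R]

/-- the sandwich identity `(e_x · u) · e_x = u(x,x,x) • e_x`. -/
lemma sandwich (u : Flag3 P → R) (x : P) :
    mul3 P R (mul3 P R (E3 x) u) (E3 x)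
      = u ⟨(x,x,x), ⟨le_refl x, le_refl x⟩⟩ • E3 x := by
  apply flag_ext
  intro a b c hab hbc
  rw [← tfn_pos (mul3 P R (mul3 P R (E3 x) u) (E3 x)) hab hbc, R_E3 _ _ hab hbc]
  have h2 : tfn (mul3 P R (E3 x) u) a x x
      = if a = x ∧ x = x then tfn u x x x else 0 := by
    by_cases hax : a ≤ x
    · exact L_E3 u x hax (le_refl x)
    · rw [if_neg (by rintro ⟨rfl, -⟩; exact hax (le_refl a))]
      unfold tfn
      rw [dif_neg (by rintro ⟨h, -⟩; exact hax h)]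
  have hr : (u ⟨(x,x,x), ⟨le_refl x, le_refl x⟩⟩ • E3 (R := R) x) ⟨(a,b,c),⟨hab,hbc⟩⟩
      = if a = x ∧ b = x ∧ c = x then tfn u x x x else 0 := by
    rw [Pi.smul_apply, smul_eq_mul]
    have := tfn_E3 (R := R) x a b c
    rw [tfn_pos _ hab hbc] at this
    rw [this, tfn_pos _ (le_refl x) (le_refl x)]
    by_cases h : a = x ∧ b = x ∧ c = x <;> simp [h]
  rw [hr, h2]
  by_cases h1 : b = x <;> by_cases h2 : c = x <;> by_cases h3 : a = x <;>
    simp [h1, h2, h3]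

/-- `e_x · e_{(x,x,x')} = e_{(x,x,x')}` -/
lemma E3_mul_e3 {x x' : P} (hxx' : x ≤ x') :
    mul3 P R (E3 x) (e3 R ⟨(x,x,x'), ⟨le_refl x, hxx'⟩⟩)
      = e3 R ⟨(x,x,x'), ⟨le_refl x, hxx'⟩⟩ := by
  apply flag_ext
  intro a b c hab hbc
  rw [← tfn_pos (mul3 P R (E3 x) (e3 R ⟨(x,x,x'), ⟨le_refl x, hxx'⟩⟩)) hab hbc,
    ← tfn_pos (e3 R ⟨(x,x,x'), ⟨le_refl x, hxx'⟩⟩) hab hbc, L_E3 _ _ hab hbc, tfn_e3, tfn_e3]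
  simp only [Prod.mk.injEq]
  by_cases h1 : a = x <;> by_cases h2 : b = x <;> by_cases h3 : c = x' <;>
    simp [h1, h2, h3]

/-- `e_{(x,x',x')} · e_{x'} = e_{(x,x',x')}` -/
lemma e3_mul_E3 {x x' : P} (hxx' : x ≤ x') :
    mul3 P R (e3 R ⟨(x,x',x'), ⟨hxx', le_refl x'⟩⟩) (E3 x')
      = e3 R ⟨(x,x',x'), ⟨hxx', le_refl x'⟩⟩ := by
  apply flag_ext
  intro a b c hab hbc
  rw [← tfn_pos (mul3 P R (e3 R ⟨(x,x',x'), ⟨hxx', le_refl x'⟩⟩) (E3 x')) hab hbc,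
    ← tfn_pos (e3 R ⟨(x,x',x'), ⟨hxx', le_refl x'⟩⟩) hab hbc, R_E3 _ _ hab hbc, tfn_e3, tfn_e3]
  simp only [Prod.mk.injEq]
  by_cases h1 : a = x <;> by_cases h2 : b = x' <;> by_cases h3 : c = x' <;>
    simp [h1, h2, h3]

/-- the witness element is nonzero -/
lemma witness_ne_zero [Nontrivial R] {x x' : P} (hxx' : x ≤ x') :
    mul3 P R (e3 R ⟨(x,x,x'), ⟨le_refl x, hxx'⟩⟩) (e3 R ⟨(x,x',x'), ⟨hxx', le_refl x'⟩⟩) ≠ 0 := by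
  intro h0
  have := congrFun h0 ⟨(x,x,x'), ⟨le_refl x, hxx'⟩⟩
  rw [mul3_apply _ _ (le_refl x) hxx'] at this
  rw [Finset.Icc_self, Finset.sum_singleton] at this
  have hterm : ∀ v ∈ Finset.Icc x x',
      tfn (e3 R ⟨(x,x,x'), ⟨le_refl x, hxx'⟩⟩) x x v *
        tfn (e3 R ⟨(x,x',x'), ⟨hxx', le_refl x'⟩⟩) x v x'
      = if v = x' then 1 else 0 := by
    intro v _
    rw [tfn_e3, tfn_e3]
    simp only [Prod.mk.injEq]
    by_cases h : v = x' <;> simp [h]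
  rw [Finset.sum_congr rfl hterm, Finset.sum_ite_eq' (Finset.Icc x x') x'] at this
  simp [Finset.mem_Icc, hxx'] at this

/-- structure lemma: `(g·e_y)·g = g` forces `g` to be supported on flags with middle `y`. -/
lemma mid_supported {g : Flag3 P → R} {y : P}
    (hg : mul3 P R (mul3 P R g (E3 y)) g = g)
    {a b c : P} (hab : a ≤ b) (hbc : b ≤ c) (hb : b ≠ y) :
    tfn g a b c = 0 := by
  have h1 : tfn (mul3 P R (mul3 P R g (E3 y)) g) a b c = 0 := by
    rw [tfn_pos _ hab hbc, mul3_apply _ _ hab hbc]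
    apply Finset.sum_eq_zero
    intro u hu
    apply Finset.sum_eq_zero
    intro v hv
    rw [Finset.mem_Icc] at hu hv
    rw [R_E3 _ _ (hu.1) (hu.2.trans hv.1)]
    by_cases h : u = y ∧ v = y
    · obtain ⟨rfl, rfl⟩ := h
      exact absurd (le_antisymm hv.1 hu.2) hb
    · rw [if_neg h, zero_mul]
  rw [hg] at h1
  exact h1

/-- soundness: a nonzero `(g·h1)·(h2·g')` forces `y ≤ y'`. -/
lemma sound {g g' h1 h2 : Flag3 P → R} {y y' : P}
    (hgmid : ∀ a b c, a ≤ b → b ≤ c → b ≠ y → tfn g a b c = 0)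
    (hgmid' : ∀ a b c, a ≤ b → b ≤ c → b ≠ y' → tfn g' a b c = 0)
    (hne : mul3 P R (mul3 P R g h1) (mul3 P R h2 g') ≠ 0) : y ≤ y' := by
  have ⟨t, ht⟩ : ∃ t, mul3 P R (mul3 P R g h1) (mul3 P R h2 g') t ≠ 0 := by
    by_contra hall
    push_neg at hall
    exact hne (funext hall)
  obtain ⟨⟨a,b,c⟩, ⟨hab, hbc⟩⟩ := t
  rw [mul3_apply _ _ hab hbc] at ht
  obtain ⟨u, hu, ht⟩ := Finset.exists_ne_zero_of_sum_ne_zero ht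
  obtain ⟨v, hv, ht⟩ := Finset.exists_ne_zero_of_sum_ne_zero ht
  rw [Finset.mem_Icc] at hu hv
  have huv : u ≤ v := hu.2.trans hv.1
  have hF : tfn (mul3 P R g h1) a u v ≠ 0 := left_ne_zero_of_mul ht
  have hG : tfn (mul3 P R h2 g') u v c ≠ 0 := right_ne_zero_of_mul ht
  -- extract from F
  rw [tfn_pos _ hu.1 huv, mul3_apply _ _ hu.1 huv] at hF
  obtain ⟨p, hp, hF⟩ := Finset.exists_ne_zero_of_sum_ne_zero hF
  obtain ⟨q, hq, hF⟩ := Finset.exists_ne_zero_of_sum_ne_zero hF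
  rw [Finset.mem_Icc] at hp hq
  have hgp : tfn g a p q ≠ 0 := left_ne_zero_of_mul hF
  have hpy : p = y := by
    by_contra hne'
    exact hgp (hgmid a p q hp.1 (hp.2.trans hq.1) hne')
  -- extract from G
  rw [tfn_pos _ huv hv.2, mul3_apply _ _ huv hv.2] at hG
  obtain ⟨p', hp', hG⟩ := Finset.exists_ne_zero_of_sum_ne_zero hG
  obtain ⟨q', hq', hG⟩ := Finset.exists_ne_zero_of_sum_ne_zero hG
  rw [Finset.mem_Icc] at hp' hq'
  have hgq : tfn g' p' q' c ≠ 0 := right_ne_zero_of_mul hG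
  have hqy : q' = y' := by
    by_contra hne'
    exact hgq (hgmid' p' q' c (hp'.2.trans hq'.1) hq'.2 hne')
  calc y = p := hpy.symm
    _ ≤ u := hp.2
    _ ≤ v := huv
    _ ≤ q' := hq'.1
    _ = y' := hqy

end FlagAux

namespace FlagAux

section Diag
variable {P R : Type*} [PartialOrder P] [DecidableEq P] [LocallyFiniteOrder P] [CommRing R]

/-- the diagonal linear map -/
def DgL (P R : Type*) [PartialOrder P] [DecidableEq P] [LocallyFiniteOrder P] [CommRing R] :
    (Flag3 P → R) →ₗ[R] (P → R) where
  toFun f := fun x => f ⟨(x,x,x), ⟨le_refl x, le_refl x⟩⟩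
  map_add' _ _ := rfl
  map_smul' _ _ := rfl

/-- the diagonal embedding -/
def iotaL (P R : Type*) [PartialOrder P] [DecidableEq P] [LocallyFiniteOrder P] [CommRing R] :
    (P → R) →ₗ[R] (Flag3 P → R) where
  toFun ψ := fun t => if t.1.1 = t.1.2.1 ∧ t.1.2.1 = t.1.2.2 then ψ t.1.1 else 0
  map_add' ψ ψ' := by
    funext t
    by_cases h : t.1.1 = t.1.2.1 ∧ t.1.2.1 = t.1.2.2 <;> simp [h]
  map_smul' r ψ := by
    funext t
    by_cases h : t.1.1 = t.1.2.1 ∧ t.1.2.1 = t.1.2.2 <;> simp [h]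

lemma tfn_iota (ψ : P → R) (a b c : P) :
    tfn (iotaL P R ψ) a b c = if a = b ∧ b = c then ψ a else 0 := by
  unfold tfn iotaL
  by_cases h : a ≤ b ∧ b ≤ c
  · rw [dif_pos h]; rfl
  · rw [dif_neg h, if_neg]
    rintro ⟨rfl, rfl⟩
    exact h ⟨le_refl a, le_refl a⟩

lemma Dg_iota (ψ : P → R) : DgL P R (iotaL P R ψ) = ψ := by
  funext x
  show (if x = x ∧ x = x then ψ x else 0) = ψ x
  simp

lemma Dg_mul3 (f g : Flag3 P → R) : DgL P R (mul3 P R f g) = DgL P R f * DgL P R g := by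
  funext x
  show mul3 P R f g ⟨(x,x,x), _⟩ = _
  rw [mul3_apply _ _ (le_refl x) (le_refl x), Finset.Icc_self, Finset.sum_singleton,
    Finset.sum_singleton]
  rw [tfn_pos _ (le_refl x) (le_refl x), tfn_pos _ (le_refl x) (le_refl x)]
  rfl

lemma iota_mul (ψ ψ' : P → R) :
    mul3 P R (iotaL P R ψ) (iotaL P R ψ') = iotaL P R (ψ * ψ') := by
  apply flag_ext
  intro a b c hab hbc
  rw [mul3_apply _ _ hab hbc, ← tfn_pos (iotaL P R (ψ * ψ')) hab hbc, tfn_iota]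
  have hterm : ∀ u ∈ Finset.Icc a b, ∀ v ∈ Finset.Icc b c,
      tfn (iotaL P R ψ) a u v * tfn (iotaL P R ψ') u v c
        = if u = a ∧ v = a then (if a = c then ψ a * ψ' a else 0) else 0 := by
    intro u _ v _
    rw [tfn_iota, tfn_iota]
    by_cases hA : a = u ∧ u = v
    · rw [if_pos hA]
      by_cases hB : u = v ∧ v = c
      · rw [if_pos hB, if_pos ⟨hA.1.symm, (hA.1.trans hA.2).symm⟩,
          if_pos (hA.1.trans (hA.2.trans hB.2)), ← hA.1]
      · rw [if_neg hB, mul_zero]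
        by_cases hC : u = a ∧ v = a
        · rw [if_pos hC, if_neg]
          intro hac
          exact hB ⟨hC.1.trans hC.2.symm, hC.2.trans hac⟩
        · rw [if_neg hC]
    · rw [if_neg hA, zero_mul, if_neg]
      intro hC
      exact hA ⟨hC.1.symm, hC.1.trans hC.2.symm⟩
  rw [Finset.sum_congr rfl (fun u hu => Finset.sum_congr rfl (fun v hv => hterm u hu v hv)),
    sum_sum_ite]
  simp only [Finset.mem_Icc]
  by_cases hm : (a ≤ a ∧ a ≤ b) ∧ b ≤ a ∧ a ≤ c
  · have hba : a = b := le_antisymm hab hm.2.1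
    rw [if_pos hm]
    by_cases hac : a = c
    · rw [if_pos hac, if_pos ⟨hba, hba ▸ hac⟩]; rfl
    · rw [if_neg hac, if_neg (by rintro ⟨rfl, rfl⟩; exact hac rfl)]
  · rw [if_neg hm, if_neg]
    rintro ⟨rfl, rfl⟩
    exact hm ⟨⟨le_refl a, hab⟩, hbc, le_refl a⟩

/-- `E3 x = iota (chi x)` -/
def chi (P : Type*) (R : Type*) [DecidableEq P] [CommRing R] (x : P) : P → R :=
  fun p => if p = x then 1 else 0

lemma E3_eq_iota_chi (x : P) : E3 (R := R) x = iotaL P R (chi P R x) := by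
  apply flag_ext
  intro a b c hab hbc
  rw [← tfn_pos (E3 (R := R) x) hab hbc, ← tfn_pos (iotaL P R (chi P R x)) hab hbc,
    tfn_E3, tfn_iota]
  unfold chi
  by_cases h : a = x ∧ b = x ∧ c = x
  · obtain ⟨rfl, h2, h3⟩ := h
    simp [h2, h3]
  · rw [if_neg h]
    by_cases h1 : a = b ∧ b = c
    · obtain ⟨rfl, rfl⟩ := h1
      rw [if_pos ⟨rfl, rfl⟩, if_neg (fun hax => h ⟨hax, hax, hax⟩)]
    · rw [if_neg h1]

lemma chi_mul_chi (x x' : P) :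
    chi P R x * chi P R x' = if x = x' then chi P R x else 0 := by
  funext p
  unfold chi
  rw [Pi.mul_apply]
  by_cases h1 : p = x <;> by_cases h2 : p = x' <;> by_cases h3 : x = x' <;>
    subst_eqs <;> simp_all

lemma sum_chi [Fintype P] : (∑ x : P, chi P R x) = 1 := by
  funext p
  rw [Finset.sum_apply]
  unfold chi
  rw [Finset.sum_ite_eq Finset.univ p (fun _ => (1 : R))]
  simp

lemma pi_decomp [Fintype P] (ψ : P → R) : ψ = ∑ x : P, ψ x • chi P R x := by
  funext p
  rw [Finset.sum_apply]
  unfold chi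
  have : ∀ x ∈ Finset.univ, (ψ x • fun q => if q = x then (1:R) else 0) p
      = if p = x then ψ x else 0 := by
    intro x _
    by_cases h : p = x <;> simp [h]
  rw [Finset.sum_congr rfl this, Finset.sum_ite_eq Finset.univ p ψ]
  simp

end Diag

section Comm
variable {P R : Type*} [PartialOrder P] [Fintype P] [DecidableEq P] [LocallyFiniteOrder P]
  [CommRing R]

lemma e3_decomp (f : Flag3 P → R) : f = ∑ t : Flag3 P, f t • e3 R t := by
  funext t'
  rw [Finset.sum_apply]
  have : ∀ t ∈ Finset.univ, (f t • e3 R t) t' = if t' = t then f t else 0 := by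
    intro t _
    unfold e3
    by_cases h : t' = t <;> simp [h]
  rw [Finset.sum_congr rfl this, Finset.sum_ite_eq Finset.univ t' f]
  simp

/-- product of adjacent basis elements -/
lemma e3_mul_e3_chain {a b d : P} (hab : a ≤ b) (hbd : b ≤ d) :
    mul3 P R (e3 R ⟨(a,b,b), ⟨hab, le_refl b⟩⟩) (e3 R ⟨(b,b,d), ⟨le_refl b, hbd⟩⟩)
      = e3 R ⟨(a,b,d), ⟨hab, hbd⟩⟩ := by
  apply flag_ext
  intro α β γ h1 h2
  rw [mul3_apply _ _ h1 h2, ← tfn_pos (e3 R ⟨(a,b,d), ⟨hab, hbd⟩⟩) h1 h2, tfn_e3]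
  have hterm : ∀ u ∈ Finset.Icc α β, ∀ v ∈ Finset.Icc β γ,
      tfn (e3 R ⟨(a,b,b), ⟨hab, le_refl b⟩⟩) α u v *
        tfn (e3 R ⟨(b,b,d), ⟨le_refl b, hbd⟩⟩) u v γ
      = if u = b ∧ v = b then (if α = a ∧ γ = d then 1 else 0) else 0 := by
    intro u _ v _
    rw [tfn_e3, tfn_e3]
    simp only [Prod.mk.injEq]
    by_cases hu : u = b <;> by_cases hv : v = b <;> by_cases hα : α = a <;>
      by_cases hγ : γ = d <;> simp [hu, hv, hα, hγ]
  rw [Finset.sum_congr rfl (fun u hu => Finset.sum_congr rfl (fun v hv => hterm u hu v hv)),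
    sum_sum_ite]
  simp only [Finset.mem_Icc, Prod.mk.injEq]
  by_cases hm : (α ≤ b ∧ b ≤ β) ∧ β ≤ b ∧ b ≤ γ
  · have hβ : β = b := le_antisymm hm.2.1 hm.1.2
    rw [if_pos hm]
    by_cases hα : α = a <;> by_cases hγ : γ = d <;> simp [hα, hβ, hγ]
  · rw [if_neg hm, if_neg]
    rintro ⟨rfl, rfl, rfl⟩
    exact hm ⟨⟨h1, le_refl β⟩, le_refl β, h2⟩

/-- reversed product vanishes for non-constant flags -/
lemma e3_mul_e3_rev {a b d : P} (hab : a ≤ b) (hbd : b ≤ d) (hne : ¬ (b = a ∧ d = b)) :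
    mul3 P R (e3 R ⟨(b,b,d), ⟨le_refl b, hbd⟩⟩) (e3 R ⟨(a,b,b), ⟨hab, le_refl b⟩⟩) = 0 := by
  apply flag_ext
  intro α β γ h1 h2
  rw [mul3_apply _ _ h1 h2, Pi.zero_apply]
  apply Finset.sum_eq_zero
  intro u _
  apply Finset.sum_eq_zero
  intro v _
  rw [tfn_e3, tfn_e3]
  simp only [Prod.mk.injEq]
  by_cases hc1 : α = b ∧ u = b ∧ v = d
  · rw [if_pos hc1,
      if_neg (fun h => hne ⟨hc1.2.1.symm.trans h.1, hc1.2.2.symm.trans h.2.1⟩), mul_zero]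
  · rw [if_neg hc1, zero_mul]

end Comm
end FlagAux

namespace FlagAux

section Transport
variable {P Q R : Type*}
  [PartialOrder P] [Fintype P] [DecidableEq P] [LocallyFiniteOrder P]
  [PartialOrder Q] [Fintype Q] [DecidableEq Q] [LocallyFiniteOrder Q]
  [CommRing R]

lemma symm_mul (Φ : (Flag3 P → R) ≃ₗ[R] (Flag3 Q → R))
    (hΦ : ∀ f g : Flag3 P → R, Φ (mul3 P R f g) = mul3 Q R (Φ f) (Φ g)) :
    ∀ f g : Flag3 Q → R, Φ.symm (mul3 Q R f g) = mul3 P R (Φ.symm f) (Φ.symm g) := by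
  intro f g
  apply Φ.injective
  rw [Φ.apply_symm_apply, hΦ, Φ.apply_symm_apply, Φ.apply_symm_apply]

/-- transport of the diagonal kernel -/
lemma Dg_transport (Φ : (Flag3 P → R) ≃ₗ[R] (Flag3 Q → R))
    (hΦ : ∀ f g : Flag3 P → R, Φ (mul3 P R f g) = mul3 Q R (Φ f) (Φ g))
    {f : Flag3 P → R} (hf : DgL P R f = 0) : DgL Q R (Φ f) = 0 := by
  -- f lies in the span of commutators
  set S : Set (Flag3 P → R) :=
    {h | ∃ u v : Flag3 P → R, h = mul3 P R u v - mul3 P R v u} with hS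
  have hfS : f ∈ Submodule.span R S := by
    rw [e3_decomp (R := R) f]
    apply Submodule.sum_mem
    intro t _
    obtain ⟨⟨a,b,d⟩, ⟨hab, hbd⟩⟩ := t
    by_cases hconst : b = a ∧ d = b
    · have he : (⟨(a,b,d), ⟨hab,hbd⟩⟩ : Flag3 P)
          = ⟨(a,a,a), ⟨le_refl a, le_refl a⟩⟩ := by
        apply Subtype.ext
        simp [Prod.ext_iff, hconst.1, hconst.2.trans hconst.1]
      have h0 : f ⟨(a,b,d), ⟨hab, hbd⟩⟩ = 0 := by
        rw [he]
        simpa [DgL] using congrFun hf a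
      rw [h0, zero_smul]
      exact Submodule.zero_mem _
    · apply Submodule.smul_mem
      apply Submodule.subset_span
      refine ⟨e3 R ⟨(a,b,b), ⟨hab, le_refl b⟩⟩, e3 R ⟨(b,b,d), ⟨le_refl b, hbd⟩⟩, ?_⟩
      rw [e3_mul_e3_chain hab hbd, e3_mul_e3_rev hab hbd hconst, sub_zero]
  have hspan : Submodule.span R S ≤ LinearMap.ker (DgL Q R ∘ₗ Φ.toLinearMap) := by
    rw [Submodule.span_le]
    rintro h ⟨u, v, rfl⟩
    simp only [SetLike.mem_coe, LinearMap.mem_ker, LinearMap.comp_apply,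
      LinearEquiv.coe_toLinearMap, map_sub]
    rw [hΦ, hΦ, Dg_mul3, Dg_mul3, mul_comm, sub_self]
  exact hspan hfS
end Transport
end FlagAux

namespace FlagAux

section Transport2
variable {P Q R : Type*}
  [PartialOrder P] [Fintype P] [DecidableEq P] [LocallyFiniteOrder P]
  [PartialOrder Q] [Fintype Q] [DecidableEq Q] [LocallyFiniteOrder Q]
  [CommRing R]

/-- the induced map on diagonals -/
def phibL (Φ : (Flag3 P → R) ≃ₗ[R] (Flag3 Q → R)) : (P → R) →ₗ[R] (Q → R) :=
  (DgL Q R) ∘ₗ (Φ.toLinearMap ∘ₗ iotaL P R)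

lemma phibL_apply (Φ : (Flag3 P → R) ≃ₗ[R] (Flag3 Q → R)) (ψ : P → R) :
    phibL Φ ψ = DgL Q R (Φ (iotaL P R ψ)) := rfl

lemma phibL_mul (Φ : (Flag3 P → R) ≃ₗ[R] (Flag3 Q → R))
    (hΦ : ∀ f g : Flag3 P → R, Φ (mul3 P R f g) = mul3 Q R (Φ f) (Φ g))
    (ψ ψ' : P → R) : phibL Φ (ψ * ψ') = phibL Φ ψ * phibL Φ ψ' := by
  rw [phibL_apply, phibL_apply, phibL_apply, ← iota_mul, hΦ, Dg_mul3]

lemma phib_symm_phib (Φ : (Flag3 P → R) ≃ₗ[R] (Flag3 Q → R))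
    (hΦ : ∀ f g : Flag3 P → R, Φ (mul3 P R f g) = mul3 Q R (Φ f) (Φ g))
    (ψ : P → R) : phibL Φ.symm (phibL Φ ψ) = ψ := by
  rw [phibL_apply, phibL_apply]
  have hker : DgL Q R (iotaL Q R (DgL Q R (Φ (iotaL P R ψ))) - Φ (iotaL P R ψ)) = 0 := by
    rw [map_sub, Dg_iota, sub_self]
  have htr := Dg_transport Φ.symm (symm_mul Φ hΦ) hker
  rw [map_sub, map_sub] at htr
  have : DgL P R (Φ.symm (iotaL Q R (DgL Q R (Φ (iotaL P R ψ)))))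
      = DgL P R (Φ.symm (Φ (iotaL P R ψ))) := by
    exact sub_eq_zero.mp htr
  rw [this, Φ.symm_apply_apply, Dg_iota]

lemma phib_one (Φ : (Flag3 P → R) ≃ₗ[R] (Flag3 Q → R))
    (hΦ : ∀ f g : Flag3 P → R, Φ (mul3 P R f g) = mul3 Q R (Φ f) (Φ g)) :
    phibL Φ.symm (1 : Q → R) = 1 := by
  have he : ∀ w : P → R, w = phibL Φ.symm 1 * w := by
    intro w
    calc w = phibL Φ.symm (phibL Φ w) := (phib_symm_phib Φ hΦ w).symm
      _ = phibL Φ.symm (1 * phibL Φ w) := by rw [one_mul]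
      _ = phibL Φ.symm 1 * phibL Φ.symm (phibL Φ w) :=
          phibL_mul Φ.symm (symm_mul Φ hΦ) _ _
      _ = phibL Φ.symm 1 * w := by rw [phib_symm_phib Φ hΦ w]
  have := he 1
  rw [mul_one] at this
  exact this.symm

lemma corr_idem (Φ : (Flag3 P → R) ≃ₗ[R] (Flag3 Q → R))
    (hΦ : ∀ f g : Flag3 P → R, Φ (mul3 P R f g) = mul3 Q R (Φ f) (Φ g)) (y : Q) :
    phibL Φ.symm (chi Q R y) * phibL Φ.symm (chi Q R y) = phibL Φ.symm (chi Q R y) := by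
  rw [← phibL_mul Φ.symm (symm_mul Φ hΦ), chi_mul_chi, if_pos rfl]

lemma corr_orth (Φ : (Flag3 P → R) ≃ₗ[R] (Flag3 Q → R))
    (hΦ : ∀ f g : Flag3 P → R, Φ (mul3 P R f g) = mul3 Q R (Φ f) (Φ g))
    {y y' : Q} (hyy : y ≠ y') :
    phibL Φ.symm (chi Q R y) * phibL Φ.symm (chi Q R y') = 0 := by
  rw [← phibL_mul Φ.symm (symm_mul Φ hΦ), chi_mul_chi, if_neg hyy, map_zero]

lemma corr_vals (Φ : (Flag3 P → R) ≃ₗ[R] (Flag3 Q → R))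
    (hΦ : ∀ f g : Flag3 P → R, Φ (mul3 P R f g) = mul3 Q R (Φ f) (Φ g))
    (hR : ∀ r : R, r * r = r → r = 0 ∨ r = 1) (y : Q) (x : P) :
    phibL Φ.symm (chi Q R y) x = 0 ∨ phibL Φ.symm (chi Q R y) x = 1 := by
  apply hR
  have := congrFun (corr_idem Φ hΦ y) x
  simpa using this

lemma corr_exists [Nontrivial R] (Φ : (Flag3 P → R) ≃ₗ[R] (Flag3 Q → R))
    (hΦ : ∀ f g : Flag3 P → R, Φ (mul3 P R f g) = mul3 Q R (Φ f) (Φ g))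
    (hR : ∀ r : R, r * r = r → r = 0 ∨ r = 1) (x : P) :
    ∃ y : Q, phibL Φ.symm (chi Q R y) x = 1 := by
  by_contra hno
  push_neg at hno
  have hz : ∀ y : Q, phibL Φ.symm (chi Q R y) x = 0 :=
    fun y => (corr_vals Φ hΦ hR y x).resolve_right (hno y)
  have hs : (∑ y : Q, phibL Φ.symm (chi Q R y)) = 1 := by
    rw [← map_sum, sum_chi, phib_one Φ hΦ]
  have := congrFun hs x
  rw [Finset.sum_apply] at this
  rw [Finset.sum_congr rfl (fun y _ => hz y)] at this
  simp at this

lemma corr_unique [Nontrivial R] (Φ : (Flag3 P → R) ≃ₗ[R] (Flag3 Q → R))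
    (hΦ : ∀ f g : Flag3 P → R, Φ (mul3 P R f g) = mul3 Q R (Φ f) (Φ g))
    {x : P} {y y' : Q} (hy : phibL Φ.symm (chi Q R y) x = 1)
    (hy' : phibL Φ.symm (chi Q R y') x = 1) : y = y' := by
  by_contra hne
  have := congrFun (corr_orth Φ hΦ hne) x
  rw [Pi.mul_apply, hy, hy', mul_one, Pi.zero_apply] at this
  exact one_ne_zero this

lemma corr_absorb (Φ : (Flag3 P → R) ≃ₗ[R] (Flag3 Q → R))
    (hΦ : ∀ f g : Flag3 P → R, Φ (mul3 P R f g) = mul3 Q R (Φ f) (Φ g))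
    (x : P) (y : Q) :
    phibL Φ.symm (chi Q R y) x
      = phibL Φ (chi P R x) y * phibL Φ.symm (chi Q R y) x := by
  have hdec : chi P R x
      = ∑ y' : Q, phibL Φ (chi P R x) y' • phibL Φ.symm (chi Q R y') := by
    calc chi P R x = phibL Φ.symm (phibL Φ (chi P R x)) := (phib_symm_phib Φ hΦ _).symm
      _ = phibL Φ.symm (∑ y' : Q, phibL Φ (chi P R x) y' • chi Q R y') := by
          rw [← pi_decomp]
      _ = ∑ y' : Q, phibL Φ (chi P R x) y' • phibL Φ.symm (chi Q R y') := by
          rw [map_sum]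
          exact Finset.sum_congr rfl fun y' _ => by rw [map_smul]
  have h1 : chi P R x * phibL Φ.symm (chi Q R y)
      = phibL Φ (chi P R x) y • phibL Φ.symm (chi Q R y) := by
    conv_lhs => rw [hdec]
    rw [Finset.sum_mul, Finset.sum_eq_single y]
    · rw [smul_mul_assoc, corr_idem Φ hΦ]
    · intro y' _ hne
      rw [smul_mul_assoc, corr_orth Φ hΦ hne, smul_zero]
    · intro hy
      exact absurd (Finset.mem_univ y) hy
  have := congrFun h1 x
  rw [Pi.mul_apply, Pi.smul_apply, smul_eq_mul] at this
  have hchi : chi P R x x = 1 := if_pos rfl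
  rw [hchi, one_mul] at this
  exact this

lemma corr_symm_vals (Φ : (Flag3 P → R) ≃ₗ[R] (Flag3 Q → R))
    (hΦ : ∀ f g : Flag3 P → R, Φ (mul3 P R f g) = mul3 Q R (Φ f) (Φ g))
    (x : P) (y : Q) :
    phibL Φ (chi P R x) y = phibL Φ.symm (chi Q R y) x := by
  have h1 := corr_absorb Φ hΦ x y
  have h2 := corr_absorb Φ.symm (symm_mul Φ hΦ) y x
  rw [LinearEquiv.symm_symm] at h2
  calc phibL Φ (chi P R x) y
      = phibL Φ.symm (chi Q R y) x * phibL Φ (chi P R x) y := h2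
    _ = phibL Φ (chi P R x) y * phibL Φ.symm (chi Q R y) x := mul_comm _ _
    _ = phibL Φ.symm (chi Q R y) x := h1.symm

/-- Key monotonicity. -/
lemma key_mono [Nontrivial R] (Φ : (Flag3 P → R) ≃ₗ[R] (Flag3 Q → R))
    (hΦ : ∀ f g : Flag3 P → R, Φ (mul3 P R f g) = mul3 Q R (Φ f) (Φ g))
    {x x' : P} {y y' : Q} (hxx' : x ≤ x')
    (hy : phibL Φ.symm (chi Q R y) x = 1)
    (hy' : phibL Φ.symm (chi Q R y') x' = 1) :
    y ≤ y' := by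
  have hid : ∀ (z : P) (w : Q), phibL Φ.symm (chi Q R w) z = 1 →
      mul3 Q R (mul3 Q R (Φ (E3 z)) (E3 w)) (Φ (E3 z)) = Φ (E3 z) := by
    intro z w hw
    have hcoef : (Φ.symm (E3 (R := R) w)) ⟨(z,z,z), ⟨le_refl z, le_refl z⟩⟩ = 1 := by
      rw [E3_eq_iota_chi]
      exact hw
    have hP : mul3 P R (mul3 P R (E3 z) (Φ.symm (E3 w))) (E3 z) = E3 z := by
      rw [sandwich (Φ.symm (E3 w)) z, hcoef, one_smul]
    calc mul3 Q R (mul3 Q R (Φ (E3 z)) (E3 w)) (Φ (E3 z))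
        = mul3 Q R (mul3 Q R (Φ (E3 z)) (Φ (Φ.symm (E3 w)))) (Φ (E3 z)) := by
          rw [Φ.apply_symm_apply]
      _ = Φ (mul3 P R (mul3 P R (E3 z) (Φ.symm (E3 w))) (E3 z)) := by rw [hΦ, hΦ]
      _ = Φ (E3 z) := by rw [hP]
  have hmidg : ∀ a b c, a ≤ b → b ≤ c → b ≠ y → tfn (Φ (E3 (R := R) x)) a b c = 0 :=
    fun a b c hab hbc hb => mid_supported (hid x y hy) hab hbc hb
  have hmidg' : ∀ a b c, a ≤ b → b ≤ c → b ≠ y' → tfn (Φ (E3 (R := R) x')) a b c = 0 :=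
    fun a b c hab hbc hb => mid_supported (hid x' y' hy') hab hbc hb
  have hw := witness_ne_zero (R := R) hxx'
  have hW : mul3 Q R (mul3 Q R (Φ (E3 x)) (Φ (e3 R ⟨(x,x,x'), ⟨le_refl x, hxx'⟩⟩)))
      (mul3 Q R (Φ (e3 R ⟨(x,x',x'), ⟨hxx', le_refl x'⟩⟩)) (Φ (E3 x'))) ≠ 0 := by
    rw [← hΦ, ← hΦ, E3_mul_e3 hxx', e3_mul_E3 hxx', ← hΦ]
    intro h0
    exact hw (by simpa using Φ.injective (by rw [h0, map_zero]))
  exact sound hmidg hmidg' hW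

end Transport2
end FlagAux

/-- If `I^3(P,R) ≅ I^3(Q,R)` for finite posets `P`, `Q` over an
indecomposable commutative ring `R`, then `P ≅ Q` as posets. -/
theorem poset_iso_of_flag_algebra_iso
    {P Q R : Type*} [PartialOrder P] [Fintype P] [DecidableEq P] [LocallyFiniteOrder P]
    [PartialOrder Q] [Fintype Q] [DecidableEq Q] [LocallyFiniteOrder Q]
    [CommRing R] [Nontrivial R] (hR : ∀ r : R, r * r = r → r = 0 ∨ r = 1)
    (h : ∃ Φ : (Flag3 P → R) ≃ₗ[R] (Flag3 Q → R),
      ∀ f g : Flag3 P → R, Φ (mul3 P R f g) = mul3 Q R (Φ f) (Φ g)) :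
    Nonempty (P ≃o Q) := by
  classical
  obtain ⟨Φ, hΦ⟩ := h
  have hΦs := FlagAux.symm_mul Φ hΦ
  have hex : ∀ x : P, ∃ y : Q, FlagAux.phibL Φ.symm (FlagAux.chi Q R y) x = 1 :=
    fun x => FlagAux.corr_exists Φ hΦ hR x
  have hexs : ∀ y : Q, ∃ x : P, FlagAux.phibL Φ (FlagAux.chi P R x) y = 1 := by
    intro y
    obtain ⟨x, hx⟩ := FlagAux.corr_exists Φ.symm hΦs hR y
    rw [LinearEquiv.symm_symm] at hx
    exact ⟨x, hx⟩
  choose σ hσ using hex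
  choose τ hτ using hexs
  have hcs := FlagAux.corr_symm_vals Φ hΦ
  have hτσ : ∀ x, τ (σ x) = x := by
    intro x
    have h2 : FlagAux.phibL Φ.symm.symm (FlagAux.chi P R (τ (σ x))) (σ x) = 1 := by
      rw [LinearEquiv.symm_symm]
      exact hτ (σ x)
    have h3 : FlagAux.phibL Φ.symm.symm (FlagAux.chi P R x) (σ x) = 1 := by
      rw [LinearEquiv.symm_symm, hcs]
      exact hσ x
    exact FlagAux.corr_unique Φ.symm hΦs h2 h3
  have hστ : ∀ y, σ (τ y) = y := by
    intro y
    have h1 : FlagAux.phibL Φ.symm (FlagAux.chi Q R y) (τ y) = 1 := by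
      rw [← hcs]
      exact hτ y
    exact FlagAux.corr_unique Φ hΦ (hσ (τ y)) h1
  have hmono : ∀ x x' : P, x ≤ x' → σ x ≤ σ x' :=
    fun x x' hxx' => FlagAux.key_mono Φ hΦ hxx' (hσ x) (hσ x')
  have hmono' : ∀ y y' : Q, y ≤ y' → τ y ≤ τ y' := by
    intro y y' hyy'
    have h1 : FlagAux.phibL Φ.symm.symm (FlagAux.chi P R (τ y)) y = 1 := by
      rw [LinearEquiv.symm_symm]
      exact hτ y
    have h2 : FlagAux.phibL Φ.symm.symm (FlagAux.chi P R (τ y')) y' = 1 := by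
      rw [LinearEquiv.symm_symm]
      exact hτ y'
    exact FlagAux.key_mono Φ.symm hΦs hyy' h1 h2
  refine ⟨⟨⟨σ, τ, hτσ, hστ⟩, fun {x x'} => ⟨fun hle => ?_, fun hle => hmono _ _ hle⟩⟩⟩
  have hle' : σ x ≤ σ x' := hle
  have := hmono' _ _ hle'
  rwa [hτσ, hτσ] at this
end

section
/- Let P be a finite poset, R a commutative unital ring and i ≥ 0. If f, g ∈ J^3_i(P,R) and x ≤ y ≤ z in P with l(x,z) = i, then (fg)(x,y,z) = f(x,x,z)·g(x,z,z). -/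
theorem Set.chainHeight_insert_of_forall_gt {α : Type*} [Preorder α] {s : Set α} (a : α)
    (hx : ∀ b ∈ s, a < b) :
    (insert a s).chainHeight (· < ·) = s.chainHeight (· < ·) + 1 := by
  have ha : a ∉ s := fun h => lt_irrefl a (hx a h)
  apply le_antisymm
  · rw [Set.chainHeight_eq_iSup]
    refine iSup_le fun t => ?_
    have hsub : t.val ⊆ insert a (t.val \ {a}) := by
      intro w hw; by_cases hwa : w = a
      · exact Or.inl hwa
      · exact Or.inr ⟨hw, hwa⟩
    have hd : t.val \ {a} ⊆ s := by
      rintro w ⟨hw, hwa⟩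
      rcases t.2.1 hw with h | h
      · exact absurd h hwa
      · exact h
    calc t.val.encard ≤ (insert a (t.val \ {a})).encard := Set.encard_le_encard hsub
      _ ≤ (t.val \ {a}).encard + 1 := Set.encard_insert_le _ _
      _ ≤ s.chainHeight (· < ·) + 1 := by
          gcongr
          exact Set.encard_le_chainHeight_of_isChain _ _ hd (t.2.2.mono Set.diff_subset)
  · haveI : Nonempty { t // t ⊆ s ∧ IsChain (fun x1 x2 : α => x1 < x2) t } :=
      ⟨⟨∅, Set.empty_subset _, IsChain.empty⟩⟩
    rw [Set.chainHeight_eq_iSup, ENat.iSup_add]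
    refine iSup_le fun t => ?_
    have hat : a ∉ t.val := fun h => ha (t.2.1 h)
    rw [← Set.encard_insert_of_notMem hat]
    refine Set.encard_le_chainHeight_of_isChain _ _ (Set.insert_subset_insert t.2.1) ?_
    exact t.2.2.insert fun b hb _ => Or.inl (hx b (t.2.1 hb))

theorem Set.chainHeight_insert_of_forall_lt {α : Type*} [Preorder α] {s : Set α} (a : α)
    (hx : ∀ b ∈ s, b < a) :
    (insert a s).chainHeight (· < ·) = s.chainHeight (· < ·) + 1 := by
  have ha : a ∉ s := fun h => lt_irrefl a (hx a h)
  apply le_antisymm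
  · rw [Set.chainHeight_eq_iSup]
    refine iSup_le fun t => ?_
    have hsub : t.val ⊆ insert a (t.val \ {a}) := by
      intro w hw; by_cases hwa : w = a
      · exact Or.inl hwa
      · exact Or.inr ⟨hw, hwa⟩
    have hd : t.val \ {a} ⊆ s := by
      rintro w ⟨hw, hwa⟩
      rcases t.2.1 hw with h | h
      · exact absurd h hwa
      · exact h
    calc t.val.encard ≤ (insert a (t.val \ {a})).encard := Set.encard_le_encard hsub
      _ ≤ (t.val \ {a}).encard + 1 := Set.encard_insert_le _ _
      _ ≤ s.chainHeight (· < ·) + 1 := by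
          gcongr
          exact Set.encard_le_chainHeight_of_isChain _ _ hd (t.2.2.mono Set.diff_subset)
  · haveI : Nonempty { t // t ⊆ s ∧ IsChain (fun x1 x2 : α => x1 < x2) t } :=
      ⟨⟨∅, Set.empty_subset _, IsChain.empty⟩⟩
    rw [Set.chainHeight_eq_iSup, ENat.iSup_add]
    refine iSup_le fun t => ?_
    have hat : a ∉ t.val := fun h => ha (t.2.1 h)
    rw [← Set.encard_insert_of_notMem hat]
    refine Set.encard_le_chainHeight_of_isChain _ _ (Set.insert_subset_insert t.2.1) ?_
    exact t.2.2.insert fun b hb _ => Or.inr (hx b (t.2.1 hb))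

private lemma ell_lt_of_lt_left {P : Type*} [PartialOrder P] {x u z : P} (hxu : x < u)
    (huz : u ≤ z) {i : ℕ} (h : ell x z = (i : ℕ∞)) : ell u z < (i : ℕ∞) := by
  unfold ell at *
  have h1 : (insert x (Set.Icc u z)).chainHeight (· < ·) = (Set.Icc u z).chainHeight (· < ·) + 1 :=
    Set.chainHeight_insert_of_forall_gt _ (fun y hy => hxu.trans_le hy.1)
  have h2 : insert x (Set.Icc u z) ⊆ Set.Icc x z := by
    rintro w (rfl | hw)
    · exact ⟨le_rfl, (hxu.le.trans huz)⟩
    · exact ⟨hxu.le.trans hw.1, hw.2⟩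
  have hne : (Set.Icc x z).chainHeight (· < ·) ≠ ⊤ := by
    intro ht; rw [ht] at h; simp at h
  have hch : (Set.Icc x z).chainHeight (· < ·) = (i : ℕ∞) + 1 := by
    have h1' : 1 ≤ (Set.Icc x z).chainHeight (· < ·) :=
      (Set.one_le_chainHeight_iff _ _).2 ⟨x, le_rfl, hxu.le.trans huz⟩
    lift (Set.Icc x z).chainHeight (· < ·) to ℕ using hne with n hn
    rw [← Nat.cast_one, ← ENat.coe_sub, Nat.cast_inj] at h
    rw [← Nat.cast_one, Nat.cast_le] at h1'
    rw [← Nat.cast_one, ← Nat.cast_add, Nat.cast_inj]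
    omega
  have h3 : (Set.Icc u z).chainHeight (· < ·) + 1 ≤ (i : ℕ∞) + 1 := by
    rw [← h1, ← hch]; exact Set.chainHeight_mono _ _ _ h2
  have h4 : (Set.Icc u z).chainHeight (· < ·) ≤ (i : ℕ∞) :=
    (ENat.add_le_add_iff_right ENat.one_ne_top).1 h3
  have h5 : 1 ≤ (Set.Icc u z).chainHeight (· < ·) :=
    (Set.one_le_chainHeight_iff _ _).2 ⟨u, le_rfl, huz⟩
  have hne2 : (Set.Icc u z).chainHeight (· < ·) ≠ ⊤ := fun ht => by simp [ht] at h4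
  lift (Set.Icc u z).chainHeight (· < ·) to ℕ using hne2 with m hm
  rw [← Nat.cast_one, Nat.cast_le] at h5
  rw [Nat.cast_le] at h4
  rw [← Nat.cast_one, ← ENat.coe_sub, Nat.cast_lt]
  omega

private lemma ell_lt_of_lt_right {P : Type*} [PartialOrder P] {x v z : P} (hxv : x ≤ v)
    (hvz : v < z) {i : ℕ} (h : ell x z = (i : ℕ∞)) : ell x v < (i : ℕ∞) := by
  unfold ell at *
  have h1 : (insert z (Set.Icc x v)).chainHeight (· < ·) = (Set.Icc x v).chainHeight (· < ·) + 1 :=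
    Set.chainHeight_insert_of_forall_lt _ (fun y hy => hy.2.trans_lt hvz)
  have h2 : insert z (Set.Icc x v) ⊆ Set.Icc x z := by
    rintro w (rfl | hw)
    · exact ⟨hxv.trans hvz.le, le_rfl⟩
    · exact ⟨hw.1, hw.2.trans hvz.le⟩
  have hne : (Set.Icc x z).chainHeight (· < ·) ≠ ⊤ := by
    intro ht; rw [ht] at h; simp at h
  have hch : (Set.Icc x z).chainHeight (· < ·) = (i : ℕ∞) + 1 := by
    have h1' : 1 ≤ (Set.Icc x z).chainHeight (· < ·) :=
      (Set.one_le_chainHeight_iff _ _).2 ⟨x, le_rfl, hxv.trans hvz.le⟩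
    lift (Set.Icc x z).chainHeight (· < ·) to ℕ using hne with n hn
    rw [← Nat.cast_one, ← ENat.coe_sub, Nat.cast_inj] at h
    rw [← Nat.cast_one, Nat.cast_le] at h1'
    rw [← Nat.cast_one, ← Nat.cast_add, Nat.cast_inj]
    omega
  have h3 : (Set.Icc x v).chainHeight (· < ·) + 1 ≤ (i : ℕ∞) + 1 := by
    rw [← h1, ← hch]; exact Set.chainHeight_mono _ _ _ h2
  have h4 : (Set.Icc x v).chainHeight (· < ·) ≤ (i : ℕ∞) :=
    (ENat.add_le_add_iff_right ENat.one_ne_top).1 h3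
  have h5 : 1 ≤ (Set.Icc x v).chainHeight (· < ·) :=
    (Set.one_le_chainHeight_iff _ _).2 ⟨x, le_rfl, hxv⟩
  have hne2 : (Set.Icc x v).chainHeight (· < ·) ≠ ⊤ := fun ht => by simp [ht] at h4
  lift (Set.Icc x v).chainHeight (· < ·) to ℕ using hne2 with m hm
  rw [← Nat.cast_one, Nat.cast_le] at h5
  rw [Nat.cast_le] at h4
  rw [← Nat.cast_one, ← ENat.coe_sub, Nat.cast_lt]
  omega

set_option maxHeartbeats 1600000 in
/-- If `f, g ∈ J^3_i(P,R)` and `x ≤ y ≤ z` with `l(x,z) = i`, then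
`(fg)(x,y,z) = f(x,x,z)·g(x,z,z)`. -/
theorem mul3_apply_of_mem_J3
    {P R : Type*} [PartialOrder P] [Fintype P] [DecidableEq P] [LocallyFiniteOrder P]
    [CommRing R] (i : ℕ) {f g : Flag3 P → R}
    (hf : f ∈ J3 P R i) (hg : g ∈ J3 P R i)
    {x y z : P} (hxy : x ≤ y) (hyz : y ≤ z) (hl : ell x z = (i : ℕ∞)) :
    mul3 P R f g ⟨(x, y, z), hxy, hyz⟩ =
      f ⟨(x, x, z), le_rfl, hxy.trans hyz⟩ * g ⟨(x, z, z), hxy.trans hyz, le_rfl⟩ := by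
  classical
  have hxz : x ≤ z := hxy.trans hyz
  unfold mul3
  have hmem : ((x, z) : P × P) ∈ (Finset.Icc x y) ×ˢ (Finset.Icc y z) := by
    simp [Finset.mem_product, Finset.mem_Icc, hxy, hyz, hxz]
  rw [Finset.sum_eq_single_of_mem ⟨(x, z), hmem⟩ (Finset.mem_attach _ _)]
  intro b _ hb
  obtain ⟨⟨u, v⟩, hbmem⟩ := b
  obtain ⟨h1, h2⟩ := Finset.mem_product.mp hbmem
  rw [Finset.mem_Icc] at h1 h2
  by_cases hu : u = x
  · have hv : v ≠ z := fun hv => hb (Subtype.ext (show (u, v) = (x, z) by rw [hu, hv]))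
    exact mul_eq_zero_of_left
      (hf ⟨(x, u, v), hu ▸ le_rfl, h1.2.trans h2.1⟩ (ell_lt_of_lt_right (hxy.trans h2.1) (lt_of_le_of_ne h2.2 hv) hl)) _
  · exact mul_eq_zero_of_right _
      (hg _ (ell_lt_of_lt_left (lt_of_le_of_ne h1.1 (Ne.symm hu)) (h1.2.trans (h2.1.trans h2.2)) hl))
end

section
/- Let P be a finite poset, R a commutative unital ring, i ≥ 0, f ∈ J^3_i(P,R) and x ≤ y ≤ z in P. If x < y then e_{xyz}·f ∈ J^3_{i+1}(P,R), and if y < z then f·e_{xyz} ∈ J^3_{i+1}(P,R). -/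
lemma enat_le_sub_one {a b : ℕ∞} (h : a + 1 ≤ b) : a ≤ b - 1 := by
  have h2 := tsub_le_tsub_right h 1
  rwa [show a + 1 - 1 = a by cases a <;> rfl] at h2

lemma chainHeight_succ_le_insert {P : Type*} [PartialOrder P] (s : Set P) (a : P)
    (ha : ∀ b ∈ s, a < b ∨ b < a) :
    s.chainHeight (· < ·) + 1 ≤ (insert a s).chainHeight (· < ·) := by
  by_cases htop : s.chainHeight (· < ·) = ⊤
  · have := Set.chainHeight_mono (· < ·) _ _ (Set.subset_insert a s)
    rw [htop] at this ⊢
    rw [top_add]; exact this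
  · obtain ⟨t, hts, hteq, htc⟩ := Set.exists_eq_chainHeight_of_chainHeight_ne_top s _ htop
    have hat : a ∉ t := fun h => by rcases ha a (hts h) with h' | h' <;> exact lt_irrefl _ h'
    rw [← hteq, ← Set.encard_insert_of_notMem hat]
    exact Set.encard_le_chainHeight_of_isChain _ _ (Set.insert_subset_insert hts)
      (htc.insert fun b hb _ => ha b (hts hb))

lemma ell_succ_le_left {P : Type*} [PartialOrder P] {x y c : P} (hxy : x < y) (hyc : y ≤ c) :
    ell y c + 1 ≤ ell x c := by
  unfold ell
  have h1 : (Set.Icc y c).chainHeight (· < ·) + 1 ≤ (insert x (Set.Icc y c)).chainHeight (· < ·) :=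
    chainHeight_succ_le_insert _ _ (fun b hb => Or.inl (hxy.trans_le hb.1))
  have h2 : (insert x (Set.Icc y c)).chainHeight (· < ·) ≤ (Set.Icc x c).chainHeight (· < ·) := by
    apply Set.chainHeight_mono
    rintro b (rfl | hb)
    · exact ⟨le_refl _, hxy.le.trans hyc⟩
    · exact ⟨hxy.le.trans hb.1, hb.2⟩
  have hne : 1 ≤ (Set.Icc y c).chainHeight (· < ·) := by
    rw [Set.one_le_chainHeight_iff]
    exact ⟨y, Set.left_mem_Icc.mpr hyc⟩
  calc (Set.Icc y c).chainHeight (· < ·) - 1 + 1 = (Set.Icc y c).chainHeight (· < ·) :=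
        tsub_add_cancel_of_le hne
    _ ≤ (Set.Icc x c).chainHeight (· < ·) - 1 := enat_le_sub_one (h1.trans h2)

lemma ell_succ_le_right {P : Type*} [PartialOrder P] {w y z : P} (hwy : w ≤ y) (hyz : y < z) :
    ell w y + 1 ≤ ell w z := by
  unfold ell
  have h1 : (Set.Icc w y).chainHeight (· < ·) + 1 ≤ (insert z (Set.Icc w y)).chainHeight (· < ·) :=
    chainHeight_succ_le_insert _ _ (fun b hb => Or.inr (hb.2.trans_lt hyz))
  have h2 : (insert z (Set.Icc w y)).chainHeight (· < ·) ≤ (Set.Icc w z).chainHeight (· < ·) := by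
    apply Set.chainHeight_mono
    rintro b (rfl | hb)
    · exact ⟨hwy.trans hyz.le, le_refl _⟩
    · exact ⟨hb.1, hb.2.trans hyz.le⟩
  have hne : 1 ≤ (Set.Icc w y).chainHeight (· < ·) := by
    rw [Set.one_le_chainHeight_iff]
    exact ⟨y, Set.right_mem_Icc.mpr hwy⟩
  calc (Set.Icc w y).chainHeight (· < ·) - 1 + 1 = (Set.Icc w y).chainHeight (· < ·) :=
        tsub_add_cancel_of_le hne
    _ ≤ (Set.Icc w z).chainHeight (· < ·) - 1 := enat_le_sub_one (h1.trans h2)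

/-- If `f ∈ J^3_i(P,R)` and `x ≤ y ≤ z`, then `x < y` implies
`e_{xyz}·f ∈ J^3_{i+1}(P,R)`, and `y < z` implies `f·e_{xyz} ∈ J^3_{i+1}(P,R)`. -/
theorem e3_mul_mem_J3_succ
    {P R : Type*} [PartialOrder P] [Fintype P] [DecidableEq P] [LocallyFiniteOrder P]
    [CommRing R] (i : ℕ) {f : Flag3 P → R} (hf : f ∈ J3 P R i)
    {x y z : P} (hxy : x ≤ y) (hyz : y ≤ z) :
    (x < y → mul3 P R (e3 R (⟨(x, y, z), hxy, hyz⟩ : Flag3 P)) f ∈ J3 P R (i + 1)) ∧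
    (y < z → mul3 P R f (e3 R (⟨(x, y, z), hxy, hyz⟩ : Flag3 P)) ∈ J3 P R (i + 1)) := by
  constructor
  · intro hlt t ht
    apply Finset.sum_eq_zero
    rintro ⟨⟨u, v⟩, hp⟩ -
    obtain ⟨h1, h2⟩ := Finset.mem_product.mp hp
    rw [Finset.mem_Icc] at h1 h2
    by_cases he : (⟨(t.1.1, u, v), h1.1, h1.2.trans h2.1⟩ : Flag3 P) =
        ⟨(x, y, z), hxy, hyz⟩
    · have heq : t.1.1 = x ∧ u = y ∧ v = z := by
        have := congrArg Subtype.val he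
        simp only [Prod.mk.injEq] at this
        exact this
      obtain ⟨hax, huy, hvz⟩ := heq
      have huv : u ≤ v := h1.2.trans h2.1
      have huc : u ≤ t.1.2.2 := huv.trans h2.2
      have hkey : ell u t.1.2.2 + 1 ≤ ell t.1.1 t.1.2.2 := by
        rw [huy, hax]; exact ell_succ_le_left hlt (huy ▸ huc)
      have hlt2 : ell u t.1.2.2 < (i : ℕ∞) := by
        have h3 : ell u t.1.2.2 + 1 < (i : ℕ∞) + 1 := by
          refine hkey.trans_lt ?_
          simpa [Nat.cast_add] using ht
        exact lt_of_add_lt_add_right h3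
      exact mul_eq_zero_of_right _ (hf ⟨(u, v, t.1.2.2), huv, h2.2⟩ hlt2)
    · rw [e3, if_neg he, zero_mul]
  · intro hlt t ht
    apply Finset.sum_eq_zero
    rintro ⟨⟨u, v⟩, hp⟩ -
    obtain ⟨h1, h2⟩ := Finset.mem_product.mp hp
    rw [Finset.mem_Icc] at h1 h2
    by_cases he : (⟨(u, v, t.1.2.2), h1.2.trans h2.1, h2.2⟩ : Flag3 P) =
        ⟨(x, y, z), hxy, hyz⟩
    · have heq : u = x ∧ v = y ∧ t.1.2.2 = z := by
        have := congrArg Subtype.val he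
        simp only [Prod.mk.injEq] at this
        exact this
      obtain ⟨hux, hvy, hcz⟩ := heq
      have huv : u ≤ v := h1.2.trans h2.1
      have hav : t.1.1 ≤ v := h1.1.trans huv
      have hkey : ell t.1.1 v + 1 ≤ ell t.1.1 t.1.2.2 := by
        rw [hvy]
        exact (hcz ▸ ell_succ_le_right (hvy ▸ hav) hlt)
      have hlt2 : ell t.1.1 v < (i : ℕ∞) := by
        have h3 : ell t.1.1 v + 1 < (i : ℕ∞) + 1 := by
          refine hkey.trans_lt ?_
          simpa [Nat.cast_add] using ht
        exact lt_of_add_lt_add_right h3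
      exact mul_eq_zero_of_left (hf ⟨(t.1.1, u, v), h1.1, huv⟩ hlt2) _
    · rw [e3, if_neg he, mul_zero]
end
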